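/- arXiv:2203.00090 — 10 statements merged into one kernel-verified Lean document; each statement's English description precedes it below -/
import Mathlib

section
/- Let a > 0 be real and let j ≥ 1 be an odd integer. Then the sum of the absolute values of the numbers 2√a·cos(hπ/(j+1)) for h = 1, …, j equals 2√a·(cot(π/(2j+2)) - 1). -/
open Real Finset

lemma tele (M : ℕ) (hM : 1 ≤ M) :
    (∑ h ∈ Finset.Icc 1 (M-1), Real.cos (h * π / (2*M))) * (2 * Real.sin (π/(4*M)))
      = Real.cos (π/(4*M)) - Real.sin (π/(4*M)) := by
  have hM0 : (M:ℝ) ≠ 0 := Nat.cast_ne_zero.mpr (by omega)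
  set x : ℝ := π/(4*M) with hx
  set f : ℕ → ℝ := fun k => Real.sin ((2*(k:ℝ)+1)*x) with hf
  have hcast : Finset.Icc 1 (M-1) = Finset.Ico 1 M := by ext k; simp; omega
  rw [hcast, Finset.sum_mul, Finset.sum_Ico_eq_sum_range]
  have step : ∑ i ∈ Finset.range (M-1), Real.cos (↑(1+i) * π / (2*M)) * (2 * Real.sin x)
      = ∑ i ∈ Finset.range (M-1), (f (i+1) - f i) := by
    refine Finset.sum_congr rfl fun i _ => ?_
    rw [hf]
    simp only []
    rw [Real.sin_sub_sin]
    have h1 : ((2*((i:ℝ)+1)+1) * x - (2*(i:ℝ)+1) * x) / 2 = x := by ring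
    have h2 : ((2*((i:ℝ)+1)+1) * x + (2*(i:ℝ)+1) * x) / 2 = (1+(i:ℝ)) * π / (2*M) := by
      rw [hx]; field_simp; ring
    push_cast
    rw [h1, h2]; ring
  rw [step, Finset.sum_range_sub f]
  have h3 : f (M-1) = Real.cos x := by
    rw [hf]; simp only []
    have : (2*(((M-1:ℕ)):ℝ)+1) * x = π/2 - x := by
      rw [hx, Nat.cast_sub hM]; field_simp; ring
    rw [this, Real.sin_pi_div_two_sub]
  have h4 : f 0 = Real.sin x := by rw [hf]; norm_num
  rw [h3, h4]
open Real Finset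

lemma sym (M : ℕ) (hM : 1 ≤ M) :
    ∑ h ∈ Finset.Icc 1 (2*M-1), |Real.cos (h * π / (2*M))|
      = 2 * ∑ h ∈ Finset.Icc 1 (M-1), Real.cos (h * π / (2*M)) := by
  have hM0 : (M:ℝ) ≠ 0 := Nat.cast_ne_zero.mpr (by omega)
  set g : ℕ → ℝ := fun h => |Real.cos (h * π / (2*M))| with hg
  have e1 : Finset.Icc 1 (2*M-1) = Finset.Ioc 0 (2*M-1) := by ext k; simp; omega
  have e2 : Finset.Icc 1 (M-1) = Finset.Ioc 0 (M-1) := by ext k; simp; omega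
  rw [e1, e2]
  have split1 : ∑ h ∈ Finset.Ioc 0 (M-1), g h + ∑ h ∈ Finset.Ioc (M-1) (2*M-1), g h
      = ∑ h ∈ Finset.Ioc 0 (2*M-1), g h := Finset.sum_Ioc_consecutive g (by omega) (by omega)
  have split2 : ∑ h ∈ Finset.Ioc (M-1) M, g h + ∑ h ∈ Finset.Ioc M (2*M-1), g h
      = ∑ h ∈ Finset.Ioc (M-1) (2*M-1), g h := Finset.sum_Ioc_consecutive g (by omega) (by omega)
  have eM : Finset.Ioc (M-1) M = {M} := by ext k; simp; omega
  have gM : g M = 0 := by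
    rw [hg]; simp only []
    have : (M:ℝ) * π / (2*M) = π/2 := by field_simp
    rw [this, Real.cos_pi_div_two, abs_zero]
  have upper : ∑ h ∈ Finset.Ioc M (2*M-1), g h = ∑ h ∈ Finset.Ioc 0 (M-1), g h := by
    refine Finset.sum_nbij' (fun h => 2*M - h) (fun h => 2*M - h) ?_ ?_ ?_ ?_ ?_
    · intro h hh; simp at hh ⊢; omega
    · intro h hh; simp at hh ⊢; omega
    · intro h hh; simp only [Finset.mem_Ioc] at hh; show 2*M - (2*M - h) = h; omega
    · intro h hh; simp only [Finset.mem_Ioc] at hh; show 2*M - (2*M - h) = h; omega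
    · intro h hh
      simp only [Finset.mem_Ioc] at hh
      rw [hg]; simp only []
      have hc : ((2*M - h : ℕ) : ℝ) = 2*M - h := by
        push_cast [Nat.cast_sub (by omega : h ≤ 2*M)]; ring
      have : ((2*M - h : ℕ) : ℝ) * π / (2*M) = π - h * π / (2*M) := by
        rw [hc]; field_simp
      rw [this, Real.cos_pi_sub, abs_neg]
  have pos : ∑ h ∈ Finset.Ioc 0 (M-1), g h = ∑ h ∈ Finset.Ioc 0 (M-1), Real.cos (h * π / (2*M)) := by
    refine Finset.sum_congr rfl fun h hh => ?_
    simp only [Finset.mem_Ioc] at hh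
    rw [hg]; simp only []
    refine abs_of_nonneg (Real.cos_nonneg_of_mem_Icc ⟨?_, ?_⟩)
    · have : (0:ℝ) ≤ h * π / (2*M) := by positivity
      linarith [Real.pi_pos]
    · rw [div_le_iff₀ (by positivity)]
      have : (h:ℝ) ≤ M := by exact_mod_cast (by omega : h ≤ M)
      nlinarith [Real.pi_pos]
  calc ∑ h ∈ Finset.Ioc 0 (2*M-1), g h
      = ∑ h ∈ Finset.Ioc 0 (M-1), g h + (g M + ∑ h ∈ Finset.Ioc M (2*M-1), g h) := by
        rw [← split1, ← split2, eM, Finset.sum_singleton]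
    _ = 2 * ∑ h ∈ Finset.Ioc 0 (M-1), Real.cos (h * π / (2*M)) := by
        rw [gM, upper, pos]; ring

theorem stmt_1 (a : ℝ) (ha : 0 < a) (j : ℕ) (hj : 1 ≤ j) (hodd : Odd j) :
    ∑ h ∈ Finset.Icc 1 j, |2 * Real.sqrt a * Real.cos (h * Real.pi / (j + 1))|
      = 2 * Real.sqrt a * (Real.cot (Real.pi / (2 * j + 2)) - 1) := by
  obtain ⟨m, hm⟩ := hodd
  set M : ℕ := m + 1 with hMdef
  have hM : 1 ≤ M := le_refl 1 |>.trans (by omega)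
  have hj2 : j = 2*M - 1 := by omega
  have hjR : (j:ℝ) = 2*(M:ℝ) - 1 := by
    rw [hj2]; push_cast [Nat.cast_sub (by omega : 1 ≤ 2*M)]; ring
  have hsq : (0:ℝ) ≤ 2 * Real.sqrt a := by positivity
  have hMR : (0:ℝ) < (M:ℝ) := by exact_mod_cast (by omega : 0 < M)
  set x : ℝ := π/(4*M) with hx
  have hxarg : Real.pi / (2 * (j:ℝ) + 2) = x := by rw [hjR, hx]; ring_nf
  have harg : ∀ h : ℕ, (h:ℝ) * Real.pi / ((j:ℝ) + 1) = (h:ℝ) * π / (2*M) := by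
    intro h; rw [hjR]; ring_nf
  have step1 : ∑ h ∈ Finset.Icc 1 j, |2 * Real.sqrt a * Real.cos (h * Real.pi / (j + 1))|
      = 2 * Real.sqrt a * ∑ h ∈ Finset.Icc 1 (2*M-1), |Real.cos (h * π / (2*M))| := by
    rw [Finset.mul_sum, hj2]
    refine Finset.sum_congr rfl fun h _ => ?_
    rw [abs_mul, abs_of_nonneg hsq,
      show ((2*M-1:ℕ):ℝ) + 1 = 2*(M:ℝ) by push_cast [Nat.cast_sub (by omega : 1 ≤ 2*M)]; ring]
  rw [step1, sym M hM, hxarg, show M - 1 = m by omega]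
  have hsin : 0 < Real.sin x := by
    apply Real.sin_pos_of_pos_of_lt_pi
    · rw [hx]; positivity
    · rw [hx]
      rw [div_lt_iff₀ (by positivity)]
      nlinarith [Real.pi_pos, hMR]
  have ht := tele M hM
  rw [← hx, show M - 1 = m by omega] at ht
  have h2 : (2:ℝ) * ∑ h ∈ Finset.Icc 1 m, Real.cos (h * π / (2*M)) = Real.cot x - 1 := by
    rw [Real.cot_eq_cos_div_sin]
    field_simp
    linear_combination ht
  rw [h2]
end

section
/- Let a > 0 be real and let j ≥ 2 be an even integer. Then the sum of the absolute values of the numbers 2√a·cos(hπ/(j+1)) for h = 1, …, j equals 2√a·(csc(π/(2j+2)) - 1). -/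
open Real

theorem stmt_2 (a : ℝ) (ha : 0 < a) (j : ℕ) (hj : 2 ≤ j) (heven : Even j) :
    ∑ h ∈ Finset.Icc 1 j, |2 * Real.sqrt a * Real.cos (h * Real.pi / (j + 1))|
      = 2 * Real.sqrt a * ((Real.sin (Real.pi / (2 * j + 2)))⁻¹ - 1) := by
  obtain ⟨m, hm⟩ := heven
  have hm1 : 1 ≤ m := by omega
  have hpi := Real.pi_pos
  have hn1 : (0:ℝ) < (j:ℝ) + 1 := by positivity
  set x : ℝ := Real.pi / (2 * (j:ℝ) + 2) with hxdef
  have hx0 : 0 < x := by positivity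
  have hxlt : x < Real.pi := by
    rw [hxdef, div_lt_iff₀ (by positivity)]
    nlinarith
  have hs : 0 < Real.sin x := Real.sin_pos_of_pos_of_lt_pi hx0 hxlt
  have hsa : (0:ℝ) < 2 * Real.sqrt a := by positivity
  have hfac : ∀ h : ℕ, |2 * Real.sqrt a * Real.cos (h * Real.pi / (j + 1))|
      = 2 * Real.sqrt a * |Real.cos (h * Real.pi / (j + 1))| := by
    intro h
    rw [abs_mul, abs_of_pos hsa]
  simp only [hfac, ← Finset.mul_sum]
  congr 1
  -- split the sum at m
  have hsplit : Finset.Icc 1 j = Finset.Ioc 0 j := by ext k; simp; omega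
  rw [hsplit, ← Finset.sum_Ioc_consecutive _ (Nat.zero_le m) (show m ≤ j by omega)]
  -- reflect upper half onto lower half
  have hrefl : ∑ h ∈ Finset.Ioc m j, |Real.cos (h * Real.pi / (j + 1))|
      = ∑ h ∈ Finset.Ioc 0 m, |Real.cos (h * Real.pi / (j + 1))| := by
    refine Finset.sum_nbij' (fun h => j + 1 - h) (fun h => j + 1 - h) ?_ ?_ ?_ ?_ ?_
    · intro h hh; simp only [Finset.mem_Ioc] at *; omega
    · intro h hh; simp only [Finset.mem_Ioc] at *; omega
    · intro h hh; simp only [Finset.mem_Ioc] at *; omega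
    · intro h hh; simp only [Finset.mem_Ioc] at *; omega
    · intro h hh
      simp only [Finset.mem_Ioc] at hh
      have hc : ((j + 1 - h : ℕ) : ℝ) = (j:ℝ) + 1 - h := by
        push_cast [Nat.cast_sub (by omega : h ≤ j + 1)]; ring
      rw [hc]
      have : ((j:ℝ) + 1 - h) * Real.pi / (j + 1) = Real.pi - h * Real.pi / (j + 1) := by
        field_simp
      rw [this, Real.cos_pi_sub, abs_neg]
  rw [hrefl, ← two_mul]
  -- on the lower half cos is nonneg
  have habs : ∀ h ∈ Finset.Ioc 0 m, |Real.cos (h * Real.pi / (j + 1))|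
      = Real.cos (h * Real.pi / (j + 1)) := by
    intro h hh
    simp only [Finset.mem_Ioc] at hh
    refine abs_of_nonneg (Real.cos_nonneg_of_mem_Icc ⟨?_, ?_⟩)
    · have : (0:ℝ) ≤ (h:ℝ) * Real.pi / ((j:ℝ)+1) := by positivity
      linarith
    · rw [div_le_iff₀ hn1]
      have : (h:ℝ) ≤ m := by exact_mod_cast hh.2
      have hjm : (j:ℝ) = 2 * m := by rw [hm]; push_cast; ring
      nlinarith
  rw [Finset.sum_congr rfl habs]
  -- telescoping
  have key : ∑ h ∈ Finset.Ioc 0 m, Real.cos (h * Real.pi / (j + 1))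
      = (1 - Real.sin x) / (2 * Real.sin x) := by
    have h1 : Finset.Ioc 0 m = Finset.Ico 1 (m + 1) := by ext k; simp; omega
    rw [h1, Finset.sum_Ico_eq_sum_range]
    simp only [Nat.add_sub_cancel]
    have h2 : ∀ i ∈ Finset.range m, Real.cos (((1 + i : ℕ) : ℝ) * Real.pi / (j + 1))
        = (Real.sin ((2 * (i+1) + 1) * x) - Real.sin ((2 * i + 1) * x)) / (2 * Real.sin x) := by
      intro i _
      rw [Real.sin_sub_sin]
      have e1 : ((2 * ((i:ℝ)+1) + 1) * x - (2 * i + 1) * x) / 2 = x := by ring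
      have e2 : ((2 * ((i:ℝ)+1) + 1) * x + (2 * i + 1) * x) / 2 = ((1 + i : ℕ) : ℝ) * Real.pi / (j + 1) := by
        push_cast
        rw [hxdef]
        field_simp
        ring
      rw [e1, e2]
      field_simp
    rw [Finset.sum_congr rfl h2, ← Finset.sum_div]
    have tele := Finset.sum_range_sub (fun i : ℕ => Real.sin ((2 * (i:ℝ) + 1) * x)) m
    push_cast at tele
    rw [tele]
    have e3 : (2 * (m:ℝ) + 1) * x = Real.pi / 2 := by
      rw [hxdef]
      have hjm : (j:ℝ) = 2 * m := by rw [hm]; push_cast; ring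
      rw [hjm]
      field_simp
    norm_num [e3, Real.sin_pi_div_two]
  rw [key]
  field_simp
end

section
/- For every integer j ≥ 1, the sum ∑_{h=1}^{⌊j/2⌋} cos(hπ/(j+1)) equals (1/2)·(cot(π/(2j+2)) - 1) if j is odd, and (1/2)·(csc(π/(2j+2)) - 1) if j is even. -/
open Real

lemma sum_cos_aux (θ : ℝ) (m : ℕ) :
    2 * Real.sin (θ / 2) * ∑ h ∈ Finset.Icc 1 m, Real.cos (h * θ)
      = Real.sin ((m + 1 / 2) * θ) - Real.sin (θ / 2) := by
  have key := Finset.sum_range_sub (fun i : ℕ => Real.sin ((i + 1 / 2) * θ)) m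
  push_cast at key
  have hshift : ∑ h ∈ Finset.Icc 1 m, Real.cos (h * θ)
      = ∑ i ∈ Finset.range m, Real.cos ((i + 1) * θ) := by
    rw [← Finset.Ico_add_one_right_eq_Icc, Finset.sum_Ico_eq_sum_range]
    norm_num
    apply Finset.sum_congr rfl
    intro i _
    ring_nf
  calc 2 * Real.sin (θ / 2) * ∑ h ∈ Finset.Icc 1 m, Real.cos (h * θ)
      = ∑ i ∈ Finset.range m,
          (Real.sin ((i + 1 + 1 / 2) * θ) - Real.sin ((i + 1 / 2) * θ)) := by
        rw [hshift, Finset.mul_sum]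
        apply Finset.sum_congr rfl
        intro i _
        rw [Real.sin_sub_sin]
        ring_nf
    _ = Real.sin ((m + 1 / 2) * θ) - Real.sin ((0 + 1 / 2) * θ) := key
    _ = Real.sin ((m + 1 / 2) * θ) - Real.sin (θ / 2) := by
        rw [show ((0:ℝ) + 1 / 2) * θ = θ / 2 by ring]

theorem stmt_3 (j : ℕ) (hj : 1 ≤ j) :
    ∑ h ∈ Finset.Icc 1 (j / 2), Real.cos (h * Real.pi / (j + 1))
      = if Odd j then (1 / 2) * (Real.cot (Real.pi / (2 * j + 2)) - 1)
        else (1 / 2) * ((Real.sin (Real.pi / (2 * j + 2)))⁻¹ - 1) := by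
  have hj1 : (0:ℝ) < (j:ℝ) + 1 := by positivity
  set θ : ℝ := Real.pi / (j + 1) with hθ
  have hhalf : θ / 2 = Real.pi / (2 * j + 2) := by
    rw [hθ, div_div]; congr 1; ring
  have hs : 0 < Real.sin (θ / 2) := by
    apply Real.sin_pos_of_pos_of_lt_pi
    · rw [hθ]; positivity
    · rw [hθ]
      have : Real.pi / (↑j + 1) / 2 ≤ Real.pi / 2 := by
        apply div_le_div_of_nonneg_right _ (by norm_num)
        apply div_le_self Real.pi_pos.le
        linarith
      linarith [Real.pi_pos]
  have hsum : ∑ h ∈ Finset.Icc 1 (j / 2), Real.cos (h * Real.pi / (j + 1))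
      = ∑ h ∈ Finset.Icc 1 (j / 2), Real.cos (h * θ) := by
    apply Finset.sum_congr rfl; intro h _; rw [hθ]; ring_nf
  have key := sum_cos_aux θ (j / 2)
  have hsne : Real.sin (θ / 2) ≠ 0 := ne_of_gt hs
  rcases Nat.even_or_odd j with he | ho
  · -- j even, j = 2m
    have hne : ¬ Odd j := Nat.not_odd_iff_even.mpr he
    obtain ⟨m, hm⟩ := he
    have hm2 : j = 2 * m := by omega
    have hm' : j / 2 = m := by omega
    rw [if_neg hne, hsum, hm']
    rw [hm'] at key
    have harg : ((m : ℝ) + 1 / 2) * θ = Real.pi / 2 := by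
      rw [hθ]
      have hc : (j : ℝ) = 2 * m := by exact_mod_cast hm2
      rw [hc]
      have h2m : (2 * (m:ℝ) + 1) ≠ 0 := by positivity
      field_simp
    rw [harg, Real.sin_pi_div_two] at key
    rw [← hhalf]
    field_simp at key ⊢
    linarith [key]
  · -- j odd, j = 2m+1
    obtain ⟨m, hm⟩ := ho
    have hm' : j / 2 = m := by omega
    rw [if_pos ⟨m, hm⟩, hsum, hm']
    rw [hm'] at key
    have harg : ((m : ℝ) + 1 / 2) * θ = Real.pi / 2 - θ / 2 := by
      rw [hθ]
      have hc : (j : ℝ) = 2 * m + 1 := by exact_mod_cast hm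
      rw [hc]
      have h2m : (2 * (m:ℝ) + 1 + 1) ≠ 0 := by positivity
      field_simp
      ring
    rw [harg, Real.sin_pi_div_two_sub] at key
    rw [← hhalf, Real.cot_eq_cos_div_sin]
    field_simp at key ⊢
    linarith [key]
end

section
/- Let T be a rooted tree and assign to each vertex v a rational function G(v,x) over ℤ by the recursion G(v,x) = x - ∑_{w child of v} 1/G(w,x) (so leaves get G(v,x) = x). Then the characteristic polynomial of the adjacency matrix of T equals the product over all vertices v of G(v,x). -/
open Polynomial

/-- A rooted tree on the vertex set `Fin (n+1)`, encoded by a parent function: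
the root is `0`, and every non-root vertex has a parent strictly smaller than
itself (which guarantees acyclicity and connectedness). -/
structure ParentTree (n : ℕ) where
  parent : Fin (n + 1) → Fin (n + 1)
  parent_lt : ∀ i : Fin (n + 1), i ≠ 0 → parent i < i
  parent_zero : parent 0 = 0

namespace ParentTree

variable {n : ℕ}

/-- The set of children of a vertex. -/
def children (T : ParentTree n) (v : Fin (n + 1)) : Finset (Fin (n + 1)) :=
  Finset.univ.filter fun w => T.parent w = v ∧ w ≠ v

/-- The adjacency matrix of a rooted tree, with entries in `R`. -/
def adjMat (T : ParentTree n) (R : Type) [Zero R] [One R] :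
    Matrix (Fin (n + 1)) (Fin (n + 1)) R :=
  Matrix.of fun i j => if i ≠ j ∧ (T.parent i = j ∨ T.parent j = i) then 1 else 0

/-- The degree of a vertex. -/
def deg (T : ParentTree n) (v : Fin (n + 1)) : ℕ :=
  (T.children v).card + if v = 0 then 0 else 1

end ParentTree

lemma ratfunc_intDegree_inv (x : RatFunc ℚ) (hx : x ≠ 0) :
    (x⁻¹).intDegree = -x.intDegree := by
  have h := RatFunc.intDegree_mul hx (inv_ne_zero hx)
  rw [mul_inv_cancel₀ hx, RatFunc.intDegree_one] at h
  omega

lemma ratfunc_sum_deg {α : Type*} (s : Finset α) (f : α → RatFunc ℚ)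
    (h : ∀ a ∈ s, f a ≠ 0 ∧ (f a).intDegree ≤ -1) :
    (∑ a ∈ s, f a) = 0 ∨ ((∑ a ∈ s, f a) ≠ 0 ∧ (∑ a ∈ s, f a).intDegree ≤ -1) := by
  classical
  induction s using Finset.induction_on with
  | empty => simp
  | insert _ _ hx ih =>
    rename_i a s
    rw [Finset.sum_insert hx]
    have hfa := h a (Finset.mem_insert_self a s)
    rcases ih (fun b hb => h b (Finset.mem_insert_of_mem hb)) with h0 | ⟨hS, hdS⟩
    · rw [h0, add_zero]; exact Or.inr hfa
    · by_cases h1 : f a + ∑ b ∈ s, f b = 0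
      · exact Or.inl h1
      · exact Or.inr ⟨h1, (RatFunc.intDegree_add_le hS h1).trans (max_le hfa.2 hdS)⟩

lemma children_lt {n : ℕ} (T : ParentTree n) {v w : Fin (n+1)} (h : w ∈ T.children v) :
    v < w := by
  simp only [ParentTree.children, Finset.mem_filter, Finset.mem_univ, true_and] at h
  obtain ⟨hp, hw⟩ := h
  have hw0 : w ≠ 0 := by
    rintro rfl
    rw [T.parent_zero] at hp
    exact hw hp
  exact hp ▸ T.parent_lt w hw0

lemma G_ne_zero {n : ℕ} (T : ParentTree n) (G : Fin (n + 1) → RatFunc ℚ)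
    (hG : ∀ v, G v = RatFunc.X - ∑ w ∈ T.children v, (G w)⁻¹) :
    ∀ v, G v ≠ 0 ∧ (G v).intDegree = 1 := by
  suffices key : ∀ m : ℕ, ∀ v : Fin (n+1), n - v.val ≤ m → G v ≠ 0 ∧ (G v).intDegree = 1 by
    intro v; exact key n v (by omega)
  intro m
  induction m with
  | zero =>
    intro v hv
    have hc : T.children v = ∅ := by
      rw [Finset.eq_empty_iff_forall_notMem]
      intro w hw
      have h1 : v.val < w.val := children_lt T hw
      have h2 : w.val ≤ n := by omega
      omega
    rw [hG v, hc, Finset.sum_empty, sub_zero]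
    exact ⟨RatFunc.X_ne_zero, RatFunc.intDegree_X⟩
  | succ m ih =>
    intro v hv
    have hterm : ∀ w ∈ T.children v, (G w)⁻¹ ≠ 0 ∧ ((G w)⁻¹).intDegree ≤ -1 := by
      intro w hw
      have h1 : v.val < w.val := children_lt T hw
      have h2 : w.val ≤ n := by omega
      obtain ⟨h3, h4⟩ := ih w (by omega)
      exact ⟨inv_ne_zero h3, by rw [ratfunc_intDegree_inv _ h3, h4]⟩
    rcases ratfunc_sum_deg _ _ hterm with h0 | ⟨hS, hdS⟩
    · rw [hG v, h0, sub_zero]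
      exact ⟨RatFunc.X_ne_zero, RatFunc.intDegree_X⟩
    · set S := ∑ w ∈ T.children v, (G w)⁻¹ with hSdef
      have h1 : RatFunc.X - S ≠ 0 := by
        intro h0
        rw [sub_eq_zero] at h0
        rw [← h0, RatFunc.intDegree_X] at hdS
        omega
      rw [hG v, ← hSdef]
      refine ⟨h1, ?_⟩
      have hub : (RatFunc.X - S).intDegree ≤ 1 := by
        rw [sub_eq_add_neg]
        refine (RatFunc.intDegree_add_le (neg_ne_zero.2 hS) (by rwa [← sub_eq_add_neg])).trans ?_
        rw [RatFunc.intDegree_X, RatFunc.intDegree_neg]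
        omega
      have hlb : 1 ≤ (RatFunc.X - S).intDegree := by
        have hX : (RatFunc.X : RatFunc ℚ) = (RatFunc.X - S) + S := by ring
        have h2 := RatFunc.intDegree_add_le hS (x := RatFunc.X - S)
          (by rw [← hX]; exact RatFunc.X_ne_zero)
        rw [← hX, RatFunc.intDegree_X] at h2
        rcases le_max_iff.1 h2 with h | h
        · exact h
        · omega
      omega

theorem stmt_4 {n : ℕ} (T : ParentTree n) (G : Fin (n + 1) → RatFunc ℚ)
    (hG : ∀ v, G v = RatFunc.X - ∑ w ∈ T.children v, (G w)⁻¹) :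
    algebraMap (Polynomial ℚ) (RatFunc ℚ) (T.adjMat ℚ).charpoly = ∏ v, G v := by
  classical
  have hGp : ∀ v, G v ≠ 0 := fun v => (G_ne_zero T G hG v).1
  set L : Matrix (Fin (n+1)) (Fin (n+1)) (RatFunc ℚ) :=
    Matrix.of (fun i j => if i = j then 1 else if T.parent i = j then -(G i)⁻¹ else 0)
    with hL
  have hLapp : ∀ i j, L i j = if i = j then 1 else if T.parent i = j then -(G i)⁻¹ else 0 :=
    fun i j => rfl
  have hmut : ∀ i j : Fin (n+1), i ≠ j → T.parent i = j → T.parent j = i → False := by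
    intro i j hij hpi hpj
    have hi0 : i ≠ 0 := by
      rintro rfl
      rw [T.parent_zero] at hpi
      exact hij hpi
    have hj0 : j ≠ 0 := by
      rintro rfl
      rw [T.parent_zero] at hpj
      exact hij hpj.symm
    have h1 : j < i := hpi ▸ T.parent_lt i hi0
    have h2 : i < j := hpj ▸ T.parent_lt j hj0
    exact absurd h1 (lt_asymm h2)
  have hfact : (Matrix.charmatrix (T.adjMat ℚ)).map (algebraMap (Polynomial ℚ) (RatFunc ℚ))
      = L.transpose * Matrix.diagonal G * L := by
    ext i j
    have hRHS : (L.transpose * Matrix.diagonal G * L) i j = ∑ k, (L k i * G k) * L k j := by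
      rw [Matrix.mul_apply]
      congr 1; ext k
      rw [Matrix.mul_diagonal, Matrix.transpose_apply]
    by_cases hij : i = j
    · subst hij
      rw [Matrix.map_apply, Matrix.charmatrix_apply_eq, hRHS]
      have hA : T.adjMat ℚ i i = 0 := by simp [ParentTree.adjMat]
      rw [hA, map_zero, map_sub, RatFunc.algebraMap_X, map_zero, sub_zero]
      have hpt : ∀ k, (L k i * G k) * L k i
          = (if k = i then G i else 0) + (if T.parent k = i ∧ k ≠ i then (G k)⁻¹ else 0) := by
        intro k
        rw [hLapp]
        by_cases hk : k = i
        · subst hk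
          simp
        · by_cases hp : T.parent k = i
          · rw [if_neg hk, if_pos hp, if_neg hk, if_pos ⟨hp, hk⟩, zero_add,
              neg_mul, inv_mul_cancel₀ (hGp k), neg_one_mul, neg_neg]
          · rw [if_neg hk, if_neg hp, zero_mul, zero_mul, if_neg hk,
              if_neg (fun h => hp h.1), add_zero]
      rw [Finset.sum_congr rfl (fun k _ => hpt k), Finset.sum_add_distrib]
      have h1 : (∑ k : Fin (n+1), if k = i then G i else 0) = G i := by
        simp
      have h2 : (∑ k : Fin (n+1), if T.parent k = i ∧ k ≠ i then (G k)⁻¹ else 0)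
          = ∑ w ∈ T.children i, (G w)⁻¹ := by
        rw [ParentTree.children, Finset.sum_filter]
      rw [h1, h2, hG i]
      ring
    · rw [Matrix.map_apply, Matrix.charmatrix_apply_ne (h := hij), hRHS]
      have hpt : ∀ k, (L k i * G k) * L k j
          = (if k = i ∧ T.parent i = j then (-1 : RatFunc ℚ) else 0)
            + (if k = j ∧ T.parent j = i then -1 else 0) := by
        intro k
        rw [hLapp, hLapp]
        by_cases hki : k = i
        · subst hki
          have hkj : k ≠ j := hij
          by_cases hp : T.parent k = j
          · rw [if_pos rfl, one_mul, if_neg hkj, if_pos hp, if_pos ⟨rfl, hp⟩,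
              if_neg (fun h => hkj h.1), add_zero, mul_neg, mul_inv_cancel₀ (hGp k)]
          · rw [if_pos rfl, one_mul, if_neg hkj, if_neg hp, mul_zero,
              if_neg (fun h => hp h.2), if_neg (fun h => hkj h.1), add_zero]
        · by_cases hkj : k = j
          · subst hkj
            by_cases hp : T.parent k = i
            · rw [if_neg hki, if_pos hp, if_pos rfl, mul_one, if_neg (fun h => hki h.1),
                if_pos ⟨rfl, hp⟩, neg_mul, inv_mul_cancel₀ (hGp k), zero_add]
            · rw [if_neg hki, if_neg hp, zero_mul, if_pos rfl, mul_one,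
                if_neg (fun h => hki h.1), if_neg (fun h => hp h.2), add_zero]
          · by_cases hp : T.parent k = i
            · have hp2 : T.parent k ≠ j := fun h => hij (hp.symm.trans h)
              rw [if_neg hki, if_pos hp, if_neg hkj, if_neg hp2, mul_zero,
                if_neg (fun h => hki h.1), if_neg (fun h => hkj h.1), add_zero]
            · rw [if_neg hki, if_neg hp, zero_mul, zero_mul,
                if_neg (fun h => hki h.1), if_neg (fun h => hkj h.1), add_zero]
      rw [Finset.sum_congr rfl (fun k _ => hpt k), Finset.sum_add_distrib]
      have hA : T.adjMat ℚ i j = if T.parent i = j ∨ T.parent j = i then 1 else 0 := by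
        simp [ParentTree.adjMat, hij]
      rw [hA]
      by_cases hpi : T.parent i = j <;> by_cases hpj : T.parent j = i
      · exact (hmut i j hij hpi hpj).elim
      · simp [hpi, hpj]
      · simp [hpi, hpj]
      · simp [hpi, hpj]
  have hLtri : L.BlockTriangular OrderDual.toDual := by
    intro i j hij'
    have hij2 : i < j := hij'
    rw [hLapp, if_neg (ne_of_lt hij2), if_neg]
    intro hp
    have hi0 : i ≠ 0 := by
      rintro rfl
      rw [T.parent_zero] at hp
      exact (ne_of_gt hij2) hp.symm
    have h2 := T.parent_lt i hi0
    rw [hp] at h2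
    exact absurd h2 (lt_asymm hij2)
  have hLdet : L.det = 1 := by
    rw [Matrix.det_of_lowerTriangular L hLtri]
    exact Finset.prod_eq_one fun i _ => if_pos rfl
  simp only [Matrix.charpoly]
  rw [RingHom.map_det, RingHom.mapMatrix_apply, hfact, Matrix.det_mul, Matrix.det_mul,
    Matrix.det_transpose, Matrix.det_diagonal, hLdet, mul_one, one_mul]
end

section
/- Let T be a rooted tree and assign to each vertex v a rational function H(v,x) over ℤ by the recursion H(v,x) = x - d(v) - ∑_{w child of v} 1/H(w,x), where d(v) is the degree of v in T. Then the characteristic polynomial of the Laplacian matrix of T equals the product over all vertices v of H(v,x). -/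
open Polynomial

namespace ParentTree
variable {n : ℕ}

lemma parent_le (T : ParentTree n) (v : Fin (n + 1)) : T.parent v ≤ v := by
  rcases eq_or_ne v 0 with h | h
  · simp [h, T.parent_zero]
  · exact le_of_lt (T.parent_lt v h)

lemma mem_children {T : ParentTree n} {v w : Fin (n + 1)} :
    w ∈ T.children v ↔ T.parent w = v ∧ w ≠ v := by
  simp [children]

lemma children_last (T : ParentTree n) : T.children (Fin.last n) = ∅ := by
  ext w
  simp only [mem_children, Finset.notMem_empty, iff_false, not_and]
  intro h1 h2
  have h3 := T.parent_le w
  rw [h1] at h3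
  exact h2 (le_antisymm (Fin.le_last w) h3)


end ParentTree


-- intDegree helpers
lemma intDegree_inv {K : Type*} [Field K] (x : RatFunc K) :
    x⁻¹.intDegree = -x.intDegree := by
  rcases eq_or_ne x 0 with h | h
  · simp [h, RatFunc.intDegree_zero]
  · have := RatFunc.intDegree_mul h (inv_ne_zero h)
    rw [mul_inv_cancel₀ h, RatFunc.intDegree_one] at this
    omega

lemma intDegree_add_eq_left {K : Type*} [Field K] {x y : RatFunc K}
    (hx : x ≠ 0) (h : y.intDegree < x.intDegree) : (x + y).intDegree = x.intDegree := by
  rcases eq_or_ne y 0 with hy | hy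
  · simp [hy]
  have hxy : x + y ≠ 0 := by
    intro h0
    have : y = -x := by linear_combination h0
    rw [this, RatFunc.intDegree_neg] at h; omega
  have h1 := RatFunc.intDegree_add_le hy hxy
  have h2 := RatFunc.intDegree_add_le (x := x + y) (y := -y)
    (neg_ne_zero.mpr hy) (by simpa [add_neg_cancel_right] using hx)
  rw [add_neg_cancel_right, RatFunc.intDegree_neg] at h2
  simp only [le_max_iff] at h1 h2
  omega

lemma intDegree_sum_le {K : Type*} [Field K] {ι : Type*} (s : Finset ι)
    (f : ι → RatFunc K) (c : ℤ) (hf : ∀ i ∈ s, f i = 0 ∨ (f i).intDegree ≤ c) :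
    (∑ i ∈ s, f i) = 0 ∨ (∑ i ∈ s, f i).intDegree ≤ c := by
  classical
  induction s using Finset.induction with
  | empty => simp
  | @insert a s hns ih =>
    rw [Finset.sum_insert hns]
    rcases hf a (Finset.mem_insert_self a s) with h0 | ha
    · simpa [h0] using ih fun i hi => hf i (Finset.mem_insert_of_mem hi)
    rcases ih (fun i hi => hf i (Finset.mem_insert_of_mem hi)) with h0 | hs
    · simp [h0, Or.inr ha]
    rcases eq_or_ne (f a) 0 with h0 | hfa
    · simp [h0]
      rcases eq_or_ne (∑ i ∈ s, f i) 0 with h | h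
      · exact Or.inl h
      · exact Or.inr hs
    rcases eq_or_ne (f a + ∑ i ∈ s, f i) 0 with h | h
    · exact Or.inl h
    · right
      rcases eq_or_ne (∑ i ∈ s, f i) 0 with h2 | h2
      · simpa [h2] using ha
      calc (f a + ∑ i ∈ s, f i).intDegree ≤ max (f a).intDegree (∑ i ∈ s, f i).intDegree :=
            RatFunc.intDegree_add_le h2 h
        _ ≤ c := max_le ha hs


lemma key {F : Type} [Field F] : ∀ (n : ℕ) (T : ParentTree n) (d H : Fin (n+1) → F),
    (∀ v, H v = d v - ∑ w ∈ T.children v, (H w)⁻¹) →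
    (∀ v, H v ≠ 0) →
    (Matrix.of fun i j => if i = j then d i else T.adjMat F i j).det = ∏ v, H v := by
  intro n
  induction n with
  | zero =>
    intro T d H hH _
    have h0 : (0 : Fin 1) = Fin.last 0 := rfl
    rw [Matrix.det_fin_one, Fin.prod_univ_one, hH 0, h0, T.children_last]
    simp
  | succ n ih =>
    intro T d H hH hne
    set m : Fin (n + 2) := Fin.last (n + 1) with hm
    have hm0 : m ≠ 0 := by simp [hm, Fin.ext_iff]
    set p : Fin (n + 2) := T.parent m with hp
    have hpm : p < m := T.parent_lt m hm0
    have hpm' : p ≠ m := ne_of_lt hpm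
    have hHm : H m = d m := by rw [hH m, T.children_last]; simp
    have hHm0 : H m ≠ 0 := hne m
    -- the smaller tree
    have hparb : ∀ i : Fin (n + 1), (T.parent i.castSucc).val < n + 1 := by
      intro i
      have h := T.parent_le i.castSucc
      have : (T.parent i.castSucc).val ≤ i.val := h
      omega
    set T' : ParentTree n :=
      { parent := fun i => ⟨(T.parent i.castSucc).val, hparb i⟩
        parent_lt := by
          intro i hi
          have : T.parent i.castSucc < i.castSucc :=
            T.parent_lt i.castSucc (Fin.castSucc_ne_zero_iff.mpr hi)
          simpa [Fin.lt_def] using this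
        parent_zero := by
          have : (0 : Fin (n+1)).castSucc = 0 := rfl
          simp [Fin.ext_iff, this, T.parent_zero] } with hT'
    have hpar : ∀ i j : Fin (n + 1), T'.parent i = j ↔ T.parent i.castSucc = j.castSucc := by
      intro i j
      simp [hT', Fin.ext_iff]
    have hchild : ∀ i j : Fin (n + 1), j ∈ T'.children i ↔ j.castSucc ∈ T.children i.castSucc := by
      intro i j
      rw [ParentTree.mem_children, ParentTree.mem_children, hpar]
      constructor
      · rintro ⟨h1, h2⟩
        exact ⟨h1, fun h => h2 (Fin.castSucc_injective _ h)⟩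
      · rintro ⟨h1, h2⟩
        exact ⟨h1, fun h => h2 (by rw [h])⟩
    have hset : ∀ i : Fin (n + 1), T.children i.castSucc =
        (T'.children i).map ⟨Fin.castSucc, Fin.castSucc_injective _⟩ ∪
          (if T.parent m = i.castSucc then {m} else ∅) := by
      intro i
      ext w
      simp only [Finset.mem_union, Finset.mem_map, Function.Embedding.coeFn_mk]
      rcases eq_or_ne w m with rfl | hwm
      · have him : m ≠ i.castSucc := (Fin.castSucc_lt_last i).ne'
        constructor
        · intro h
          right
          rw [ParentTree.mem_children] at h
          simp [h.1]
        · rintro (⟨j, _, hj⟩ | h)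
          · exact absurd hj (Fin.castSucc_lt_last j).ne
          · split at h
            · rw [ParentTree.mem_children]
              next hcond => exact ⟨hcond, him⟩
            · simp at h
      · have hwlt : w ≠ Fin.last (n+1) := hwm
        obtain ⟨j, rfl⟩ := Fin.exists_castSucc_eq.mpr hwlt
        constructor
        · intro h
          exact Or.inl ⟨j, (hchild i j).mpr h, rfl⟩
        · rintro (⟨j', hj', hjj⟩ | h)
          · obtain rfl := Fin.castSucc_injective _ hjj
            exact (hchild i _).mp hj'
          · split at h
            · simp at h
              exact absurd h hwm
            · simp at h
    have hsum : ∀ (i : Fin (n + 1)) (f : Fin (n + 2) → F),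
        ∑ w ∈ T.children i.castSucc, f w =
          (if T.parent m = i.castSucc then f m else 0) + ∑ j ∈ T'.children i, f j.castSucc := by
      intro i f
      rw [hset i, Finset.sum_union, Finset.sum_map]
      · rw [add_comm]
        congr 1
        split <;> simp
      · split
        · simp only [Finset.disjoint_singleton_right, Finset.mem_map,
            Function.Embedding.coeFn_mk, not_exists]
          rintro j ⟨_, hj⟩
          exact (Fin.castSucc_lt_last j).ne hj
        · simp
    set d' : Fin (n + 1) → F :=
      fun i => d i.castSucc - (if T.parent m = i.castSucc then (H m)⁻¹ else 0) with hd'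
    set H' : Fin (n + 1) → F := fun i => H i.castSucc with hH'def
    have hH' : ∀ i, H' i = d' i - ∑ j ∈ T'.children i, (H' j)⁻¹ := by
      intro i
      show H i.castSucc = _
      rw [hH i.castSucc, hsum i (fun w => (H w)⁻¹)]
      show _ = d i.castSucc - _ - _
      ring
    have hne' : ∀ i, H' i ≠ 0 := fun i => hne i.castSucc
    have hIH := ih T' d' H' hH' hne'
    -- matrices
    set M : Matrix (Fin (n+2)) (Fin (n+2)) F :=
      Matrix.of fun i j => if i = j then d i else T.adjMat F i j with hM
    have hparne : ∀ i : Fin (n + 2), i ≠ m → T.parent i ≠ m := by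
      intro i hi h
      have h3 := T.parent_le i
      rw [h] at h3
      exact hi (le_antisymm (Fin.le_last i) h3)
    have hMrow : ∀ j, j ≠ m → M m j = if j = p then 1 else 0 := by
      intro j hj
      have h1 : T.parent j ≠ m := hparne j hj
      simp only [hM, Matrix.of_apply, ParentTree.adjMat, if_neg (Ne.symm hj)]
      rcases eq_or_ne j p with rfl | hjp
      · rw [if_pos ⟨Ne.symm hj, Or.inl rfl⟩, if_pos rfl]
      · rw [if_neg, if_neg hjp]
        rintro ⟨_, h | h⟩
        · exact hjp (Eq.symm h)
        · exact h1 h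
    have hMcol : ∀ i, i ≠ m → M i m = if i = p then 1 else 0 := by
      intro i hi
      have h1 : T.parent i ≠ m := hparne i hi
      simp only [hM, Matrix.of_apply, ParentTree.adjMat, if_neg hi]
      rcases eq_or_ne i p with rfl | hip
      · rw [if_pos ⟨hi, Or.inr rfl⟩, if_pos rfl]
      · rw [if_neg, if_neg hip]
        rintro ⟨_, h | h⟩
        · exact h1 h
        · exact hip (Eq.symm h)
    have hMmm : M m m = d m := by simp [hM]
    set N : Matrix (Fin (n+2)) (Fin (n+2)) F :=
      M.updateRow p (M p + (-(H m)⁻¹) • M m) with hN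
    have hdet1 : N.det = M.det := Matrix.det_updateRow_add_smul_self M hpm' _
    have hNrow : ∀ i j, i ≠ p → N i j = M i j := by
      intro i j hi
      rw [hN, Matrix.updateRow_ne hi]
    have hNp : ∀ j, N p j = M p j + (-(H m)⁻¹) * M m j := by
      intro j
      rw [hN, Matrix.updateRow_self]
      simp
    set A : Matrix (Fin (n+1)) (Fin (n+1)) F :=
      Matrix.of fun i j => if i = j then d' i else T'.adjMat F i j with hA
    have hadj : ∀ i j : Fin (n + 1), (T.adjMat F) i.castSucc j.castSucc = (T'.adjMat F) i j := by
      intro i j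
      simp only [ParentTree.adjMat, Matrix.of_apply, ne_eq, Fin.castSucc_inj, hpar]
    set e : Fin (n+1) ⊕ Fin 1 ≃ Fin (n+2) := finSumFinEquiv with hedef
    have he1 : ∀ i : Fin (n+1), e (Sum.inl i) = i.castSucc := by
      intro i; rfl
    have he2 : ∀ j : Fin 1, (e (Sum.inr j) : Fin (n+2)) = m := by
      intro j
      have hj : j = 0 := Subsingleton.elim j 0
      subst hj
      apply Fin.ext
      rw [hedef, finSumFinEquiv_apply_right]
      show (n+1) + (0 : Fin 1).val = m.val
      simp [hm]
    have hblock : N.submatrix e e =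
        Matrix.fromBlocks A 0 (Matrix.of fun (_ : Fin 1) j => N m j.castSucc)
          (Matrix.of fun _ _ => H m) := by
      ext i j
      cases i with
      | inl i =>
        cases j with
        | inl j =>
          simp only [Matrix.submatrix_apply, he1, Matrix.fromBlocks_apply₁₁, hA, Matrix.of_apply]
          have hmj : M m j.castSucc = if j.castSucc = p then 1 else 0 :=
            hMrow j.castSucc (Fin.castSucc_lt_last j).ne
          rcases eq_or_ne i.castSucc p with hip | hip
          · have hNi : ∀ k, N i.castSucc k = M i.castSucc k + (-(H m)⁻¹) * M m k := by
              intro k; rw [hip]; exact hNp k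
            rw [hNi, hmj]
            rcases eq_or_ne i j with rfl | hij
            · rw [if_pos rfl, if_pos hip]
              have hcond : T.parent m = i.castSucc := hip.symm
              simp only [hM, Matrix.of_apply, if_pos rfl, hd']
              rw [if_pos hcond]
              simp only [if_true]
              ring
            · rw [if_neg hij, if_neg (fun h : j.castSucc = p =>
                hij (Fin.castSucc_injective _ (h.trans hip.symm)).symm), mul_zero, add_zero]
              simp only [hM, Matrix.of_apply,
                if_neg (fun h => hij (Fin.castSucc_injective _ h)), hadj]
          · rw [hNrow _ _ hip]
            simp only [hM, Matrix.of_apply]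
            rcases eq_or_ne i j with rfl | hij
            · rw [if_pos rfl, if_pos rfl]
              have hcond : ¬ (T.parent m = i.castSucc) := fun h => hip h.symm
              simp only [hd']
              rw [if_neg hcond, sub_zero]
            · rw [if_neg (fun h => hij (Fin.castSucc_injective _ h)), if_neg hij, hadj]
        | inr j =>
          simp only [Matrix.submatrix_apply, he1, he2, Matrix.fromBlocks_apply₁₂,
            Matrix.zero_apply]
          have hcol := hMcol i.castSucc (Fin.castSucc_lt_last i).ne
          rcases eq_or_ne i.castSucc p with hip | hip
          · have hNi : N i.castSucc m = M i.castSucc m + (-(H m)⁻¹) * M m m := by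
              rw [hip]; exact hNp m
            rw [hNi, hMmm, ← hHm, hcol, if_pos hip, neg_mul, inv_mul_cancel₀ hHm0]
            ring
          · rw [hNrow _ _ hip, hcol, if_neg hip]
      | inr i =>
        cases j with
        | inl j =>
          simp only [Matrix.submatrix_apply, he1, he2, Matrix.fromBlocks_apply₂₁, Matrix.of_apply]
        | inr j =>
          simp only [Matrix.submatrix_apply, he2, Matrix.fromBlocks_apply₂₂, Matrix.of_apply]
          rw [hNrow _ _ (Ne.symm hpm'), hMmm, hHm]
    have hdet2 : M.det = A.det * H m := by
      rw [← hdet1, ← Matrix.det_submatrix_equiv_self e, hblock,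
        Matrix.det_fromBlocks_zero₁₂, Matrix.det_fin_one]
      rfl
    rw [hdet2, hIH, Fin.prod_univ_castSucc (f := H)]

lemma intDegree_add_or {K : Type*} [Field K] {c : ℤ} {x y : RatFunc K}
    (hx : x = 0 ∨ x.intDegree ≤ c) (hy : y = 0 ∨ y.intDegree ≤ c) :
    x + y = 0 ∨ (x + y).intDegree ≤ c := by
  rcases hx with rfl | hx
  · simpa using hy
  rcases hy with rfl | hy
  · simpa using Or.inr hx
  rcases eq_or_ne x 0 with rfl | hx0
  · simpa using Or.inr hy
  rcases eq_or_ne y 0 with rfl | hy0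
  · simpa using Or.inr hx
  rcases eq_or_ne (x + y) 0 with h | h
  · exact Or.inl h
  · exact Or.inr ((RatFunc.intDegree_add_le hy0 h).trans (max_le hx hy))

lemma lt_of_mem_children {n : ℕ} {T : ParentTree n} {v w : Fin (n + 1)}
    (h : w ∈ T.children v) : v < w := by
  rw [ParentTree.mem_children] at h
  obtain ⟨h1, h2⟩ := h
  rcases eq_or_ne w 0 with rfl | hw0
  · exact absurd (h1.symm.trans T.parent_zero) (Ne.symm h2)
  · exact h1 ▸ T.parent_lt w hw0

theorem stmt_5 {n : ℕ} (T : ParentTree n) (H : Fin (n + 1) → RatFunc ℚ)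
    (hH : ∀ v, H v = RatFunc.X - (T.deg v : RatFunc ℚ) - ∑ w ∈ T.children v, (H w)⁻¹) :
    algebraMap (Polynomial ℚ) (RatFunc ℚ)
        (Matrix.diagonal (fun v => (T.deg v : ℚ)) - T.adjMat ℚ).charpoly
      = ∏ v, H v := by
  have hc0 : ∀ c : ℕ, ((c : RatFunc ℚ)).intDegree = 0 := by
    intro c
    rw [← map_natCast (RatFunc.C (K := ℚ)) c, RatFunc.intDegree_C]
  have hX : (RatFunc.X : RatFunc ℚ) ≠ 0 := RatFunc.X_ne_zero
  have hkey1 : ∀ (y : RatFunc ℚ), (y = 0 ∨ y.intDegree ≤ 0) → (RatFunc.X - y).intDegree = 1 := by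
    intro y hy
    rcases hy with rfl | hy
    · simpa using RatFunc.intDegree_X
    rcases eq_or_ne y 0 with rfl | hy0
    · simpa using RatFunc.intDegree_X
    rw [sub_eq_add_neg, intDegree_add_eq_left hX
      (by rw [RatFunc.intDegree_neg, RatFunc.intDegree_X]; omega), RatFunc.intDegree_X]
  have hdeg : ∀ k : ℕ, ∀ v : Fin (n+1), n - v.val ≤ k → (H v).intDegree = 1 := by
    intro k
    induction k with
    | zero =>
      intro v hv
      have hvl : v = Fin.last n := Fin.ext (by have := v.isLt; simp [Fin.last]; omega)
      rw [hH v, hvl, T.children_last]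
      simp only [Finset.sum_empty, sub_zero]
      exact hkey1 _ (Or.inr (le_of_eq (hc0 _)))
    | succ k ihk =>
      intro v hv
      rw [hH v, sub_sub]
      apply hkey1
      apply intDegree_add_or
      · exact Or.inr (le_of_eq (hc0 _))
      · apply intDegree_sum_le
        intro w hw
        right
        have hvw : v < w := lt_of_mem_children hw
        have hvw' : v.val < w.val := hvw
        have h1 : (H w).intDegree = 1 := ihk w (by omega)
        rw [intDegree_inv, h1]
        omega
  have hne : ∀ v, H v ≠ 0 := by
    intro v h
    have h2 := hdeg n v (by omega)
    rw [h, RatFunc.intDegree_zero] at h2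
    omega
  have hkey := key n T (fun v => RatFunc.X - (T.deg v : RatFunc ℚ)) H hH hne
  rw [← hkey]
  unfold Matrix.charpoly
  rw [RingHom.map_det]
  congr 1
  ext i j
  simp only [RingHom.mapMatrix_apply, Matrix.map_apply, Matrix.of_apply]
  rcases eq_or_ne i j with rfl | hij
  · rw [Matrix.charmatrix_apply_eq, if_pos rfl]
    have h1 : (Matrix.diagonal (fun v => (T.deg v : ℚ)) - T.adjMat ℚ) i i = (T.deg i : ℚ) := by
      simp [ParentTree.adjMat, Matrix.sub_apply, Matrix.diagonal_apply_eq]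
    rw [h1, map_sub, RatFunc.algebraMap_X, RatFunc.algebraMap_C, map_natCast]
  · rw [Matrix.charmatrix_apply_ne _ _ _ hij, if_neg hij]
    have h1 : (Matrix.diagonal (fun v => (T.deg v : ℚ)) - T.adjMat ℚ) i j =
        -(T.adjMat ℚ i j) := by
      simp [Matrix.sub_apply, Matrix.diagonal_apply_ne _ hij]
    rw [h1]
    simp only [map_neg, neg_neg, RatFunc.algebraMap_C, ParentTree.adjMat, Matrix.of_apply,
      apply_ite (RatFunc.C (K := ℚ)), map_one, map_zero]
end

section
/- Let T be a rooted tree with integer weights β(v), and define F(v,x) ∈ ℤ(x) recursively by F(v,x) = x - β(v) - ∑_{w child of v} 1/F(w,x). Then for every vertex v, F(v,x) can be written as a quotient F₁(v,x)/F₂(v,x) of monic polynomials in ℤ[x] with deg F₁(v,x) = deg F₂(v,x) + 1. In particular F(v,x) is nonzero. -/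
open Polynomial

lemma sum_div_eq_aux {K : Type*} [Field K] {ι : Type*} [DecidableEq ι] (s : Finset ι)
    (a b : ι → K) (ha : ∀ i ∈ s, a i ≠ 0) :
    ∑ i ∈ s, b i / a i =
      (∑ i ∈ s, b i * ∏ j ∈ s.erase i, a j) / ∏ i ∈ s, a i := by
  induction s using Finset.induction with
  | empty => simp
  | @insert i s hi ih =>
    have hai : a i ≠ 0 := ha i (Finset.mem_insert_self i s)
    have ha' : ∀ j ∈ s, a j ≠ 0 := fun j hj => ha j (Finset.mem_insert_of_mem hj)
    have hprod : ∏ j ∈ s, a j ≠ 0 := Finset.prod_ne_zero_iff.mpr ha'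
    have hcongr : ∀ j ∈ s, b j * ∏ u ∈ (insert i s).erase j, a u
        = a i * (b j * ∏ u ∈ s.erase j, a u) := by
      intro j hj
      have hji : j ≠ i := fun h => hi (h ▸ hj)
      rw [Finset.erase_insert_of_ne hji.symm,
        Finset.prod_insert (fun h => hi (Finset.mem_of_mem_erase h))]
      ring
    rw [Finset.sum_insert hi, Finset.prod_insert hi, ih ha', Finset.sum_insert hi,
      Finset.erase_insert hi, Finset.sum_congr rfl hcongr, ← Finset.mul_sum]
    field_simp

theorem stmt_7 {n : ℕ} (T : ParentTree n) (β : Fin (n + 1) → ℤ)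
    (F : Fin (n + 1) → RatFunc ℚ)
    (hF : ∀ v, F v = RatFunc.X - (β v : RatFunc ℚ) - ∑ w ∈ T.children v, (F w)⁻¹) :
    ∀ v, ∃ F₁ F₂ : Polynomial ℤ, F₁.Monic ∧ F₂.Monic ∧
      F₁.natDegree = F₂.natDegree + 1 ∧
      F v = algebraMap (Polynomial ℚ) (RatFunc ℚ) (F₁.map (Int.castRingHom ℚ)) /
              algebraMap (Polynomial ℚ) (RatFunc ℚ) (F₂.map (Int.castRingHom ℚ)) ∧
      F v ≠ 0 := by
  set φ : Polynomial ℤ →+* RatFunc ℚ :=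
    (algebraMap (Polynomial ℚ) (RatFunc ℚ)).comp (mapRingHom (Int.castRingHom ℚ)) with hφ
  have hφ_ne : ∀ p : Polynomial ℤ, p ≠ 0 → φ p ≠ 0 := by
    intro p hp
    exact RatFunc.algebraMap_ne_zero
      ((Polynomial.map_ne_zero_iff (Int.cast_injective (α := ℚ))).mpr hp)
  suffices h : ∀ m, ∀ v : Fin (n + 1), n - v.val < m →
      ∃ F₁ F₂ : Polynomial ℤ, F₁.Monic ∧ F₂.Monic ∧
        F₁.natDegree = F₂.natDegree + 1 ∧ F v = φ F₁ / φ F₂ ∧ F v ≠ 0 by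
    intro v
    obtain ⟨F₁, F₂, h₁, h₂, h₃, h₄, h₅⟩ := h (n + 1) v (by omega)
    exact ⟨F₁, F₂, h₁, h₂, h₃, h₄, h₅⟩
  intro m
  induction m with
  | zero => intro v hv; omega
  | succ m ih =>
    intro v hv
    set c := T.children v with hc
    -- children are strictly larger
    have hmem : ∀ w ∈ c, v.val < w.val := by
      intro w hw
      rw [hc, ParentTree.children, Finset.mem_filter] at hw
      obtain ⟨-, hpw, hwv⟩ := hw
      have hw0 : w ≠ 0 := by
        intro h0; apply hwv; rw [h0]; rw [h0, T.parent_zero] at hpw; exact hpw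
      have := T.parent_lt w hw0
      rw [hpw] at this
      exact this
    -- choose numerators and denominators for children
    have H : ∀ w : Fin (n + 1), ∃ A B : Polynomial ℤ, A.Monic ∧ B.Monic ∧
        A.natDegree = B.natDegree + 1 ∧ (w ∈ c → F w = φ A / φ B) := by
      intro w
      by_cases hw : w ∈ c
      · have hlt : n - w.val < m := by have := hmem w hw; omega
        obtain ⟨A, B, h₁, h₂, h₃, h₄, -⟩ := ih w hlt
        exact ⟨A, B, h₁, h₂, h₃, fun _ => h₄⟩
      · exact ⟨X, 1, monic_X, monic_one, by simp, fun h => absurd h hw⟩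
    choose A B hA hB hAB hFw using H
    have hAne : ∀ w, (A w) ≠ 0 := fun w => (hA w).ne_zero
    have hφAne : ∀ w, φ (A w) ≠ 0 := fun w => hφ_ne _ (hAne w)
    -- the new denominator and numerator
    set F₂ : Polynomial ℤ := ∏ w ∈ c, A w with hF₂
    set q : Polynomial ℤ := ∑ w ∈ c, B w * ∏ u ∈ c.erase w, A u with hq
    set F₁ : Polynomial ℤ := (X - C (β v)) * F₂ - q with hF₁
    have hF₂m : F₂.Monic := monic_prod_of_monic _ _ fun w _ => hA w
    have hF₂deg : F₂.natDegree = ∑ w ∈ c, (A w).natDegree :=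
      natDegree_prod_of_monic _ _ fun w _ => hA w
    have hpm : ((X - C (β v)) * F₂).Monic := (monic_X_sub_C _).mul hF₂m
    have hpdeg : ((X - C (β v)) * F₂).natDegree = F₂.natDegree + 1 := by
      rw [(monic_X_sub_C (β v)).natDegree_mul hF₂m, natDegree_X_sub_C]; omega
    have hqdeg : q.natDegree < ((X - C (β v)) * F₂).natDegree := by
      rw [hpdeg]
      have : q.natDegree ≤ F₂.natDegree := by
        apply natDegree_sum_le_of_forall_le
        intro w hw
        refine le_trans (natDegree_mul_le) ?_
        have h1 : (∏ u ∈ c.erase w, A u).natDegree = ∑ u ∈ c.erase w, (A u).natDegree :=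
          natDegree_prod_of_monic _ _ fun u _ => hA u
        have h2 : (A w).natDegree + ∑ u ∈ c.erase w, (A u).natDegree
            = ∑ u ∈ c, (A u).natDegree := Finset.add_sum_erase c (fun u => (A u).natDegree) hw
        have h3 := hAB w
        omega
      omega
    have hF₁m : F₁.Monic := by
      rw [hF₁, sub_eq_add_neg]
      exact hpm.add_of_left (by rw [degree_neg]; exact degree_lt_degree hqdeg)
    have hF₁deg : F₁.natDegree = F₂.natDegree + 1 := by
      rw [hF₁, natDegree_sub_eq_left_of_natDegree_lt hqdeg, hpdeg]
    have hφF₂ne : φ F₂ ≠ 0 := hφ_ne _ hF₂m.ne_zero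
    have hφF₁ne : φ F₁ ≠ 0 := hφ_ne _ hF₁m.ne_zero
    have hEq : F v = φ F₁ / φ F₂ := by
      have hsum : ∑ w ∈ c, (F w)⁻¹
          = (∑ w ∈ c, φ (B w) * ∏ u ∈ c.erase w, φ (A u)) / ∏ w ∈ c, φ (A w) := by
        rw [← sum_div_eq_aux c (fun w => φ (A w)) (fun w => φ (B w))
          (fun w _ => hφAne w)]
        refine Finset.sum_congr rfl fun w hw => ?_
        rw [hFw w hw, inv_div]
      have hφF₂' : φ F₂ = ∏ w ∈ c, φ (A w) := by rw [hF₂]; exact map_prod φ _ _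
      have hφq : φ q = ∑ w ∈ c, φ (B w) * ∏ u ∈ c.erase w, φ (A u) := by
        rw [hq, map_sum]
        refine Finset.sum_congr rfl fun w hw => ?_
        rw [map_mul, map_prod]
      have hφX : φ (X : Polynomial ℤ) = RatFunc.X := by
        show algebraMap (Polynomial ℚ) (RatFunc ℚ) ((X : Polynomial ℤ).map _) = _
        rw [Polynomial.map_X, RatFunc.algebraMap_X]
      have hφC : φ (C (β v)) = (β v : RatFunc ℚ) := by
        rw [eq_intCast (Polynomial.C : ℤ →+* Polynomial ℤ) (β v), map_intCast]
      have hφF₁' : φ F₁ = (RatFunc.X - (β v : RatFunc ℚ)) * φ F₂ - φ q := by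
        rw [hF₁, map_sub, map_mul, map_sub, hφX, hφC]
      rw [hF v, hsum, ← hφF₂', ← hφq, hφF₁', sub_div, mul_div_cancel_right₀ _ hφF₂ne]
    exact ⟨F₁, F₂, hF₁m, hF₂m, hF₁deg, hEq,
      hEq ▸ div_ne_zero hφF₁ne hφF₂ne⟩
end

section
/- Let T be a balanced rooted tree with l levels where every vertex on level j has c_j children, and let n_j denote the number of vertices on level j (with n_0 = 0). Define polynomials W_0 = 1, W_1 = x, W_j = x·W_{j-1} - c_{l+1-j}·W_{j-2} for 2 ≤ j ≤ l. Then the characteristic polynomial of the adjacency matrix of T equals ∏_{j=1}^{l} W_j^{n_{l+1-j} - n_{l-j}}. -/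
open Polynomial

theorem stmt_9 {n : ℕ} (T : ParentTree n)
    (lvl : Fin (n + 1) → ℕ)
    (hlvl0 : lvl 0 = 1)
    (hlvl : ∀ v, v ≠ 0 → lvl v = lvl (T.parent v) + 1)
    (l : ℕ)
    (hle : ∀ v, lvl v ≤ l) (hmax : ∃ v, lvl v = l)
    (c : ℕ → ℕ)
    (hc : ∀ v, (T.children v).card = c (lvl v))
    (W : ℕ → Polynomial ℚ)
    (hW0 : W 0 = 1) (hW1 : W 1 = Polynomial.X)
    (hWrec : ∀ j, 2 ≤ j → j ≤ l → W j = Polynomial.X * W (j - 1) - Polynomial.C ((c (l + 1 - j) : ℚ)) * W (j - 2)) :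
    (T.adjMat ℚ).charpoly =
      ∏ j ∈ Finset.Icc 1 l,
        W j ^ ((Finset.univ.filter fun v => lvl v = l + 1 - j).card
                - (Finset.univ.filter fun v => lvl v = l - j).card) := by
  classical
  -- basic level facts
  have lvl_pos : ∀ v : Fin (n+1), 1 ≤ lvl v := by
    intro v
    by_cases hv : v = 0
    · subst hv; omega
    · rw [hlvl v hv]; omega
  have hl1 : 1 ≤ l := hlvl0 ▸ hle 0
  have mem_children : ∀ {u v : Fin (n+1)}, u ∈ T.children v ↔ T.parent u = v ∧ u ≠ v := by
    intro u v; simp [ParentTree.children]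
  have child_ne_zero : ∀ {u v : Fin (n+1)}, u ∈ T.children v → u ≠ 0 := by
    intro u v hu h0
    obtain ⟨h1, h2⟩ := mem_children.mp hu
    subst h0
    rw [T.parent_zero] at h1
    exact h2 h1
  have child_lvl : ∀ {u v : Fin (n+1)}, u ∈ T.children v → lvl u = lvl v + 1 := by
    intro u v hu
    have h0 := child_ne_zero hu
    rw [hlvl u h0, (mem_children.mp hu).1]
  have exlvl : ∀ j, 1 ≤ j → j ≤ l → ∃ v, lvl v = j := by
    have step : ∀ j, 1 ≤ j → (∃ v, lvl v = j + 1) → ∃ v, lvl v = j := by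
      rintro j hj ⟨v, hv⟩
      have hv0 : v ≠ 0 := by intro h; subst h; omega
      exact ⟨T.parent v, by have := hlvl v hv0; omega⟩
    have key : ∀ d, 1 ≤ l - d → ∃ v, lvl v = l - d := by
      intro d
      induction d with
      | zero => intro _; simpa using hmax
      | succ d ih =>
        intro h
        refine step _ h ?_
        have h2 : l - (d+1) + 1 = l - d := by omega
        rw [h2]; exact ih (by omega)
    intro j h1 h2
    have := key (l - j) (by omega)
    rwa [show l - (l - j) = j by omega] at this
  set N : ℕ → ℕ := fun j => (Finset.univ.filter fun v => lvl v = j).card with hNdef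
  have N0 : N 0 = 0 := by
    simp only [hNdef, Finset.card_eq_zero, Finset.filter_eq_empty_iff]
    intro v _
    have := lvl_pos v; omega
  have children_nonempty : ∀ v : Fin (n+1), lvl v + 1 ≤ l → (T.children v).Nonempty := by
    intro v hvl
    obtain ⟨w, hw⟩ := exlvl (lvl v + 1) (by omega) hvl
    have hw0 : w ≠ 0 := by intro h; subst h; have := lvl_pos v; omega
    have hwp : w ∈ T.children (T.parent w) :=
      mem_children.mpr ⟨rfl, (T.parent_lt w hw0).ne'⟩
    have hcard : (T.children (T.parent w)).card = c (lvl v) := by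
      rw [hc]; congr 1; have := hlvl w hw0; omega
    rw [← Finset.card_pos, hc v, ← hcard]
    exact Finset.card_pos.mpr ⟨w, hwp⟩
  have Nmono : ∀ j, j + 1 ≤ l → N j ≤ N (j+1) := by
    intro j hj
    by_cases hj0 : j = 0
    · subst hj0; rw [N0]; omega
    · set f : Fin (n+1) → Fin (n+1) :=
        fun v => if h : (T.children v).Nonempty then h.choose else 0 with hf
      apply Finset.card_le_card_of_injOn f
      · intro v hv
        simp only [Finset.mem_coe, Finset.mem_filter, Finset.mem_univ, true_and] at hv ⊢
        have hne : (T.children v).Nonempty := children_nonempty v (by omega)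
        have hmem : f v ∈ T.children v := by rw [hf]; simp only [dif_pos hne]; exact hne.choose_spec
        rw [child_lvl hmem, hv]
      · intro v1 hv1 v2 hv2 hfeq
        have hne1 : (T.children v1).Nonempty := by
          simp only [Finset.coe_filter, Set.mem_setOf_eq] at hv1
          exact children_nonempty v1 (by omega)
        have hne2 : (T.children v2).Nonempty := by
          simp only [Finset.coe_filter, Set.mem_setOf_eq] at hv2
          exact children_nonempty v2 (by omega)
        have hm1 : f v1 ∈ T.children v1 := by rw [hf]; simp only [dif_pos hne1]; exact hne1.choose_spec
        have hm2 : f v2 ∈ T.children v2 := by rw [hf]; simp only [dif_pos hne2]; exact hne2.choose_spec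
        rw [← (mem_children.mp hm1).1, ← (mem_children.mp hm2).1, hfeq]
  have Wmonic : ∀ j, j ≤ l → (W j).Monic ∧ (W j).natDegree = j := by
    intro j
    induction j using Nat.strong_induction_on with
    | _ j ih =>
      match j with
      | 0 => intro _; rw [hW0]; exact ⟨monic_one, natDegree_one⟩
      | 1 => intro _; rw [hW1]; exact ⟨monic_X, natDegree_X⟩
      | (j+2) =>
        intro hjl
        obtain ⟨h1m, h1d⟩ := ih (j+1) (by omega) (by omega)
        obtain ⟨h0m, h0d⟩ := ih j (by omega) (by omega)
        have hrec := hWrec (j+2) (by omega) hjl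
        have e1 : j + 2 - 1 = j + 1 := by omega
        have e2 : j + 2 - 2 = j := by omega
        rw [e1, e2] at hrec
        have hpm : (X * W (j+1)).Monic := monic_X.mul h1m
        have hpd : (X * W (j+1)).natDegree = j + 2 := by
          rw [monic_X.natDegree_mul h1m, natDegree_X, h1d]; omega
        have hqd : (C ((c (l+1-(j+2)) : ℚ)) * W j).natDegree < (X * W (j+1)).natDegree := by
          have h1 : (C ((c (l+1-(j+2)) : ℚ)) * W j).natDegree ≤ j := by
            simpa [natDegree_C, h0d] using
              (natDegree_mul_le (p := C ((c (l+1-(j+2)) : ℚ))) (q := W j))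
          omega
        constructor
        · rw [hrec]; exact hpm.sub_of_left (degree_lt_degree hqd)
        · rw [hrec, natDegree_sub_eq_left_of_natDegree_lt hqd, hpd]
  -- move to the fraction field
  set φ : Polynomial ℚ →+* RatFunc ℚ := (algebraMap (Polynomial ℚ) (RatFunc ℚ)) with hφdef
  have hφinj : Function.Injective φ := IsFractionRing.injective (Polynomial ℚ) (RatFunc ℚ)
  have hWne : ∀ j, j ≤ l → φ (W j) ≠ 0 := by
    intro j hj h
    exact (Wmonic j hj).1.ne_zero (hφinj (by simpa using h))
  set d : Fin (n+1) → RatFunc ℚ :=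
    fun v => φ (W (l + 1 - lvl v)) * (φ (W (l - lvl v)))⁻¹ with hd
  have hdne : ∀ v, d v ≠ 0 := by
    intro v
    have h1 := hWne (l + 1 - lvl v) (by have := lvl_pos v; omega)
    have h2 := hWne (l - lvl v) (by omega)
    exact mul_ne_zero h1 (inv_ne_zero h2)
  set L : Matrix (Fin (n+1)) (Fin (n+1)) (RatFunc ℚ) :=
    Matrix.of (fun u v => if u = v then 1 else if u = T.parent v then -(d v)⁻¹ else 0) with hL
  have hLapp : ∀ u v, L u v = if u = v then 1 else if u = T.parent v then -(d v)⁻¹ else 0 := by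
    intro u v; rw [hL]; rfl
  have no_both : ∀ u v : Fin (n+1), u ≠ v → ¬(T.parent u = v ∧ T.parent v = u) := by
    rintro u v huv ⟨h1, h2⟩
    have hu0 : u ≠ 0 := by
      intro h; subst h; rw [T.parent_zero] at h1; exact huv h1
    have hv0 : v ≠ 0 := by
      intro h; subst h; rw [T.parent_zero] at h2; exact huv h2.symm
    have hvu := T.parent_lt u hu0
    rw [h1] at hvu
    have huv2 := T.parent_lt v hv0
    rw [h2] at huv2
    exact absurd hvu (lt_asymm huv2)
  -- the diagonal identity
  have diag_id : ∀ u : Fin (n+1), d u + ∑ w ∈ T.children u, (d w)⁻¹ = φ X := by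
    intro u
    have hterm : ∀ w ∈ T.children u,
        (d w)⁻¹ = φ (W (l - lvl u - 1)) * (φ (W (l - lvl u)))⁻¹ := by
      intro w hw
      have hwl : lvl w = lvl u + 1 := child_lvl hw
      have e1 : l + 1 - lvl w = l - lvl u := by omega
      have e2 : l - lvl w = l - lvl u - 1 := by omega
      rw [hd]
      simp only [e1, e2]
      rw [mul_inv, inv_inv, mul_comm]
    rw [Finset.sum_congr rfl hterm, Finset.sum_const, hc u, nsmul_eq_mul]
    by_cases hul : lvl u = l
    · have hemp : T.children u = ∅ := by
        rw [Finset.eq_empty_iff_forall_notMem]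
        intro w hw
        have h1 := child_lvl hw
        have h2 := hle w
        omega
      have hc0 : c (lvl u) = 0 := by rw [← hc u, hemp, Finset.card_empty]
      rw [hc0, hd]
      simp only [hul, show l + 1 - l = 1 from by omega, Nat.sub_self, hW0, hW1, map_one,
        inv_one, mul_one, Nat.cast_zero, zero_mul, add_zero]
    · have hjl : lvl u + 1 ≤ l := by have := hle u; omega
      have hu1 := lvl_pos u
      have hrec := hWrec (l + 1 - lvl u) (by omega) (by omega)
      have e3 : l + 1 - lvl u - 1 = l - lvl u := by omega
      have e4 : l + 1 - lvl u - 2 = l - lvl u - 1 := by omega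
      have e5 : l + 1 - (l + 1 - lvl u) = lvl u := by have := lvl_pos u; omega
      rw [e3, e4, e5] at hrec
      have hb := hWne (l - lvl u) (by omega)
      have happ := congrArg φ hrec
      rw [map_sub, map_mul, map_mul] at happ
      rw [C_eq_natCast, map_natCast] at happ
      rw [hd]
      field_simp
      linear_combination happ
  -- the LDL^T factorization of the characteristic matrix
  have key : ((T.adjMat ℚ).charmatrix).map φ = L * Matrix.diagonal d * L.transpose := by
    ext u v
    have hrhs : (L * Matrix.diagonal d * L.transpose) u v = ∑ w, L u w * d w * L v w := by
      rw [Matrix.mul_apply]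
      refine Finset.sum_congr rfl fun w _ => ?_
      rw [Matrix.mul_diagonal, Matrix.transpose_apply]
    rw [hrhs]
    by_cases huv : u = v
    · subst huv
      have hpt : ∀ w, L u w * d w * L u w =
          (if w = u then d u else 0) + (if w ∈ T.children u then (d w)⁻¹ else 0) := by
        intro w
        by_cases hw : w = u
        · subst hw
          have hnc : w ∉ T.children w := by
            intro h; exact (mem_children.mp h).2 rfl
          rw [hLapp]
          simp [hnc]
        · have hw' : ¬(u = w) := fun h => hw h.symm
          rw [hLapp, if_neg hw']
          by_cases hp : u = T.parent w
          · have hmem : w ∈ T.children u := mem_children.mpr ⟨hp.symm, hw⟩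
            rw [if_pos hp, if_neg hw, if_pos hmem]
            have := hdne w
            field_simp
            ring
          · have hmem : w ∉ T.children u := by
              intro h; exact hp (mem_children.mp h).1.symm
            rw [if_neg hp, if_neg hw, if_neg hmem]
            ring
      rw [Finset.sum_congr rfl (fun w _ => hpt w), Finset.sum_add_distrib,
        Finset.sum_ite_eq' Finset.univ u (fun _ => d u), Finset.sum_ite_mem,
        Finset.univ_inter, if_pos (Finset.mem_univ u)]
      rw [Matrix.map_apply, Matrix.charmatrix_apply_eq]
      have hA : T.adjMat ℚ u u = 0 := by simp [ParentTree.adjMat]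
      rw [hA, map_zero, map_sub, map_zero, sub_zero]
      exact (diag_id u).symm
    · have hpt : ∀ w, L u w * d w * L v w =
          (if w = u then (if T.parent u = v then (-1 : RatFunc ℚ) else 0) else 0) +
          (if w = v then (if T.parent v = u then (-1 : RatFunc ℚ) else 0) else 0) := by
        intro w
        rw [hLapp, hLapp]
        by_cases hw1 : w = u
        · subst hw1
          rw [if_pos rfl, if_neg (show ¬v = w from fun h => huv h.symm),
            if_neg (show ¬w = v from huv)]
          by_cases hp : T.parent w = v
          · rw [if_pos hp.symm, if_pos hp]
            have := hdne w
            field_simp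
            simp
          · rw [if_neg (fun h => hp h.symm), if_neg hp]
            simp
        · by_cases hw2 : w = v
          · subst hw2
            rw [if_pos rfl, if_neg huv, if_neg (show ¬w = u from fun h => huv h.symm)]
            by_cases hp : T.parent w = u
            · rw [if_pos hp.symm, if_pos hp]
              have := hdne w
              field_simp
              simp
            · rw [if_neg (fun h => hp h.symm), if_neg hp]
              simp
          · rw [if_neg (show ¬u = w from fun h => hw1 h.symm),
              if_neg (show ¬v = w from fun h => hw2 h.symm), if_neg hw1, if_neg hw2]
            by_cases hp1 : u = T.parent w
            · by_cases hp2 : v = T.parent w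
              · exact absurd (hp1.trans hp2.symm) huv
              · rw [if_pos hp1, if_neg hp2]
                ring
            · rw [if_neg hp1]
              split_ifs <;> ring
      rw [Finset.sum_congr rfl (fun w _ => hpt w), Finset.sum_add_distrib,
        Finset.sum_ite_eq' Finset.univ u, Finset.sum_ite_eq' Finset.univ v,
        if_pos (Finset.mem_univ u), if_pos (Finset.mem_univ v)]
      rw [Matrix.map_apply, Matrix.charmatrix_apply_ne _ _ _ huv]
      have hA : T.adjMat ℚ u v = if T.parent u = v ∨ T.parent v = u then 1 else 0 := by
        simp [ParentTree.adjMat, huv]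
      rw [hA]
      by_cases h1 : T.parent u = v <;> by_cases h2 : T.parent v = u
      · exact absurd ⟨h1, h2⟩ (no_both u v huv)
      all_goals simp [h1, h2]
  -- determinant computation
  have hLtri : L.BlockTriangular id := by
    intro u v hvu
    have h1 : ¬(u = v) := fun h => absurd hvu (by rw [h]; exact lt_irrefl _)
    have h2 : ¬(u = T.parent v) := by
      intro h
      by_cases hv0 : v = 0
      · subst hv0
        rw [T.parent_zero] at h
        subst h
        exact absurd hvu (by simp)
      · have := T.parent_lt v hv0
        rw [← h] at this
        exact absurd hvu (lt_asymm this)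
    rw [hLapp, if_neg h1, if_neg h2]
  have hdetL : L.det = 1 := by
    rw [Matrix.det_of_upperTriangular hLtri]
    apply Finset.prod_eq_one
    intro u _
    rw [hLapp, if_pos rfl]
  have hdet : φ (T.adjMat ℚ).charpoly = ∏ v, d v := by
    rw [Matrix.charpoly, RingHom.map_det, RingHom.mapMatrix_apply, key,
      Matrix.det_mul, Matrix.det_mul, hdetL, Matrix.det_transpose, hdetL,
      Matrix.det_diagonal, one_mul, mul_one]
  -- final computation
  have hNcard : ∀ a, (Finset.univ.filter fun v => lvl v = a).card = N a := fun _ => rfl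
  apply hφinj
  rw [map_prod, hdet]
  simp only [map_pow, hNcard]
  have hfib : ∏ v, d v = ∏ j ∈ Finset.Icc 1 l, (φ (W (l+1-j)) * (φ (W (l-j)))⁻¹) ^ N j := by
    rw [← Finset.prod_fiberwise_of_maps_to (g := lvl) (t := Finset.Icc 1 l)
      (fun v _ => Finset.mem_Icc.mpr ⟨lvl_pos v, hle v⟩) d]
    refine Finset.prod_congr rfl fun j hj => ?_
    have hconst : ∀ v ∈ Finset.univ.filter (fun v => lvl v = j),
        d v = φ (W (l+1-j)) * (φ (W (l-j)))⁻¹ := by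
      intro v hv
      have hlv := (Finset.mem_filter.mp hv).2
      rw [hd]
      simp only [hlv]
    rw [Finset.prod_congr rfl hconst, Finset.prod_const, hNcard j]
  have hre : ∏ j ∈ Finset.Icc 1 l, (φ (W (l+1-j)) * (φ (W (l-j)))⁻¹) ^ N j
      = ∏ k ∈ Finset.Icc 1 l, (φ (W k) * (φ (W (k-1)))⁻¹) ^ N (l+1-k) := by
    refine Finset.prod_nbij' (fun j => l + 1 - j) (fun k => l + 1 - k) ?_ ?_ ?_ ?_ ?_
    · intro a ha; simp only [Finset.mem_Icc] at *; omega
    · intro a ha; simp only [Finset.mem_Icc] at *; omega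
    · intro a ha; simp only [Finset.mem_Icc] at ha
      show l + 1 - (l + 1 - a) = a; omega
    · intro a ha; simp only [Finset.mem_Icc] at ha
      show l + 1 - (l + 1 - a) = a; omega
    · intro a ha
      simp only [Finset.mem_Icc] at ha
      have e1 : l + 1 - (l + 1 - a) = a := by omega
      have e2 : l + 1 - a - 1 = l - a := by omega
      rw [e1, e2]
  have hQ : ∏ k ∈ Finset.Icc 1 l, (φ (W (k-1))) ^ N (l+1-k)
      = ∏ k ∈ Finset.Icc 1 l, (φ (W k)) ^ N (l-k) := by
    have h1 : ∏ k ∈ Finset.Icc 1 l, (φ (W (k-1))) ^ N (l+1-k)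
        = ∏ t ∈ Finset.Icc 0 (l-1), (φ (W t)) ^ N (l-t) := by
      refine Finset.prod_nbij' (fun k => k - 1) (fun t => t + 1) ?_ ?_ ?_ ?_ ?_
      · intro a ha; simp only [Finset.mem_Icc] at *; omega
      · intro a ha; simp only [Finset.mem_Icc] at *; omega
      · intro a ha; simp only [Finset.mem_Icc] at ha
        show a - 1 + 1 = a; omega
      · intro a ha; simp only [Finset.mem_Icc] at ha
        show a + 1 - 1 = a; omega
      · intro a ha
        simp only [Finset.mem_Icc] at ha
        have e1 : l + 1 - a = l - (a - 1) := by omega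
        rw [e1]
    rw [h1]
    have h2 : ∏ t ∈ Finset.Icc 1 (l-1), (φ (W t)) ^ N (l-t)
        = ∏ t ∈ Finset.Icc 0 (l-1), (φ (W t)) ^ N (l-t) := by
      refine Finset.prod_subset (fun x hx => by simp only [Finset.mem_Icc] at *; omega) ?_
      intro x hx hnx
      simp only [Finset.mem_Icc] at hx hnx
      have hx0 : x = 0 := by omega
      subst hx0
      rw [hW0, map_one, one_pow]
    have h3 : ∏ t ∈ Finset.Icc 1 (l-1), (φ (W t)) ^ N (l-t)
        = ∏ t ∈ Finset.Icc 1 l, (φ (W t)) ^ N (l-t) := by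
      refine Finset.prod_subset (fun x hx => by simp only [Finset.mem_Icc] at *; omega) ?_
      intro x hx hnx
      simp only [Finset.mem_Icc] at hx hnx
      have hxl : x = l := by omega
      subst hxl
      rw [Nat.sub_self, N0, pow_zero]
    rw [← h2, h3]
  rw [hfib, hre]
  have hsplit : ∀ k ∈ Finset.Icc 1 l, (φ (W k) * (φ (W (k-1)))⁻¹) ^ N (l+1-k)
      = φ (W k) ^ N (l+1-k) * ((φ (W (k-1))) ^ N (l+1-k))⁻¹ := by
    intro k _; rw [mul_pow, inv_pow]
  have hQne : (∏ k ∈ Finset.Icc 1 l, (φ (W k)) ^ N (l-k)) ≠ 0 :=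
    Finset.prod_ne_zero_iff.mpr fun k hk =>
      pow_ne_zero _ (hWne k (Finset.mem_Icc.mp hk).2)
  rw [Finset.prod_congr rfl hsplit, Finset.prod_mul_distrib, Finset.prod_inv_distrib, hQ,
    ← div_eq_mul_inv, div_eq_iff hQne, ← Finset.prod_mul_distrib]
  refine Finset.prod_congr rfl fun k hk => ?_
  simp only [Finset.mem_Icc] at hk
  rw [← pow_add]
  congr 1
  have hmono := Nmono (l - k) (by omega)
  have e : l - k + 1 = l + 1 - k := by omega
  rw [e] at hmono
  omega
end

section
/- Let T be a balanced rooted tree with l levels where every vertex on level j has c_j children, with W_j defined by W_0 = 1, W_1 = x, W_j = x·W_{j-1} - c_{l+1-j}·W_{j-2}. Let Φ = {l} ∪ {j : 1 ≤ j ≤ l-1 and c_{l-j} > 1}. Then the set of distinct real eigenvalues of the adjacency matrix of T is exactly the union over j ∈ Φ of the real root sets of W_j. -/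
open Polynomial

section Aux
open ParentTree
variable {n : ℕ}

lemma charpoly_root_iff {m : ℕ} (A : Matrix (Fin m) (Fin m) ℝ) (x : ℝ) :
    A.charpoly.IsRoot x ↔ ∃ f : Fin m → ℝ, f ≠ 0 ∧ A.mulVec f = x • f := by
  have h1 : A.charpoly.eval x = (Matrix.diagonal (fun _ : Fin m => x) - A).det := by
    rw [Matrix.charpoly, ← Polynomial.coe_evalRingHom, RingHom.map_det]
    congr 1
    ext i j
    simp only [Matrix.map_apply, Matrix.charmatrix_apply, coe_evalRingHom, eval_sub, eval_C,
      Matrix.sub_apply]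
    by_cases h : i = j <;> simp [h, Matrix.diagonal]
  have h2 : ∀ f : Fin m → ℝ,
      (Matrix.diagonal (fun _ : Fin m => x) - A).mulVec f = x • f - A.mulVec f := by
    intro f
    rw [Matrix.sub_mulVec]
    congr 1
    ext i; simp [Matrix.mulVec_diagonal]
  rw [Polynomial.IsRoot, h1, ← Matrix.exists_mulVec_eq_zero_iff]
  constructor
  · rintro ⟨f, hf, h⟩
    exact ⟨f, hf, by rw [h2] at h; linear_combination (norm := module) -h⟩
  · rintro ⟨f, hf, h⟩
    exact ⟨f, hf, by rw [h2, h, sub_self]⟩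

lemma children_mem {T : ParentTree n} {v w : Fin (n + 1)} :
    w ∈ T.children v ↔ T.parent w = v ∧ w ≠ v := by
  simp [ParentTree.children]

lemma child_ne_zero {T : ParentTree n} {v w : Fin (n + 1)} (h : w ∈ T.children v) : w ≠ 0 := by
  rcases children_mem.mp h with ⟨h1, h2⟩
  rintro rfl
  rw [T.parent_zero] at h1
  exact h2 h1

lemma parent_notMem_children {T : ParentTree n} {v : Fin (n + 1)} :
    T.parent v ∉ T.children v := by
  intro h
  rcases children_mem.mp h with ⟨h1, h2⟩
  by_cases hv : v = 0
  · subst hv; rw [T.parent_zero] at h2; exact h2 rfl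
  · have hlt := T.parent_lt v hv
    by_cases hp : T.parent v = 0
    · rw [hp, T.parent_zero] at h1
      exact hv h1.symm
    · have := T.parent_lt _ hp
      rw [h1] at this
      exact absurd (this.trans hlt) (lt_irrefl _)

lemma adj_mulVec (T : ParentTree n) (f : Fin (n + 1) → ℝ) (v : Fin (n + 1)) :
    (T.adjMat ℝ).mulVec f v
      = (∑ w ∈ T.children v, f w) + (if v = 0 then 0 else f (T.parent v)) := by
  have hstep : (T.adjMat ℝ).mulVec f v
      = ∑ w ∈ Finset.univ.filter (fun w => v ≠ w ∧ (T.parent v = w ∨ T.parent w = v)), f w := by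
    rw [Finset.sum_filter, Matrix.mulVec, dotProduct]
    apply Finset.sum_congr rfl
    intro w _
    simp only [ParentTree.adjMat, Matrix.of_apply]
    by_cases h : v ≠ w ∧ (T.parent v = w ∨ T.parent w = v) <;> simp [h]
  rw [hstep]
  by_cases hv : v = 0
  · subst hv
    have hset : Finset.univ.filter (fun w => (0 : Fin (n+1)) ≠ w ∧ (T.parent 0 = w ∨ T.parent w = 0))
        = T.children 0 := by
      ext w
      simp only [Finset.mem_filter, Finset.mem_univ, true_and, children_mem, T.parent_zero]
      constructor
      · rintro ⟨h1, h2 | h2⟩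
        · exact absurd h2.symm (fun h => h1 h.symm)
        · exact ⟨h2, fun h => h1 h.symm⟩
      · rintro ⟨h1, h2⟩
        exact ⟨fun h => h2 h.symm, Or.inr h1⟩
    rw [hset]; simp
  · have hset : Finset.univ.filter (fun w => v ≠ w ∧ (T.parent v = w ∨ T.parent w = v))
        = insert (T.parent v) (T.children v) := by
      ext w
      simp only [Finset.mem_filter, Finset.mem_univ, true_and, Finset.mem_insert, children_mem]
      constructor
      · rintro ⟨h1, h2 | h2⟩
        · exact Or.inl h2.symm
        · exact Or.inr ⟨h2, fun h => h1 h.symm⟩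
      · rintro (rfl | ⟨h1, h2⟩)
        · exact ⟨fun h => absurd (T.parent_lt v hv) (by rw [← h]; exact lt_irrefl _), Or.inl rfl⟩
        · exact ⟨fun h => h2 h.symm, Or.inr h1⟩
    rw [hset, Finset.sum_insert parent_notMem_children, if_neg hv, add_comm]

end Aux
section Levels
open ParentTree
variable {n : ℕ} {T : ParentTree n} {lvl : Fin (n + 1) → ℕ}
variable (hlvl0 : lvl 0 = 1) (hlvl : ∀ v, v ≠ 0 → lvl v = lvl (T.parent v) + 1)

include hlvl0 hlvl in
lemma lvl_pos : ∀ v, 1 ≤ lvl v := by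
  intro v
  by_cases h : v = 0
  · subst h; omega
  · rw [hlvl v h]; omega

include hlvl0 hlvl in
lemma ne_zero_of_lvl {v : Fin (n + 1)} (h : 2 ≤ lvl v) : v ≠ 0 := by
  rintro rfl; omega

include hlvl in
lemma lvl_child {v w : Fin (n + 1)} (h : w ∈ T.children v) : lvl w = lvl v + 1 := by
  rcases children_mem.mp h with ⟨h1, _⟩
  rw [hlvl w (child_ne_zero h), h1]

include hlvl0 hlvl in
lemma lvl_iterate (v : Fin (n + 1)) : ∀ k, k < lvl v → lvl (T.parent^[k] v) = lvl v - k := by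
  intro k
  induction k with
  | zero => simp
  | succ k ih =>
    intro h
    have h1 : lvl (T.parent^[k] v) = lvl v - k := ih (by omega)
    have h2 : T.parent^[k] v ≠ 0 := ne_zero_of_lvl hlvl0 hlvl (by omega)
    rw [Function.iterate_succ_apply']
    have := hlvl _ h2
    omega

end Levels

section Desc
open ParentTree
variable {n : ℕ}

/-- `w` lies in the subtree rooted at `v`. -/
def Desc (T : ParentTree n) (lvl : Fin (n + 1) → ℕ) (v w : Fin (n + 1)) : Prop :=
  lvl v ≤ lvl w ∧ T.parent^[lvl w - lvl v] w = v

variable {T : ParentTree n} {lvl : Fin (n + 1) → ℕ}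
variable (hlvl0 : lvl 0 = 1) (hlvl : ∀ v, v ≠ 0 → lvl v = lvl (T.parent v) + 1)

lemma desc_self (v : Fin (n + 1)) : Desc T lvl v v := ⟨le_rfl, by simp⟩

include hlvl in
lemma desc_child {v u w : Fin (n + 1)} (hd : Desc T lvl v u) (hw : w ∈ T.children u) :
    Desc T lvl v w := by
  have hl : lvl w = lvl u + 1 := lvl_child hlvl hw
  have hp : T.parent w = u := (children_mem.mp hw).1
  have h0 := hd.1
  refine ⟨by omega, ?_⟩
  have hk : lvl w - lvl v = (lvl u - lvl v) + 1 := by omega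
  rw [hk, Function.iterate_succ_apply, hp, hd.2]

lemma desc_eq {v w : Fin (n + 1)} (hd : Desc T lvl v w) (h : lvl w = lvl v) : w = v := by
  have := hd.2
  rw [h, Nat.sub_self] at this
  simpa using this

include hlvl0 hlvl in
lemma desc_up {v w : Fin (n + 1)} (hd : Desc T lvl v w) (hne : w ≠ v) (hv : 1 ≤ lvl v) :
    lvl v < lvl w ∧ w ≠ 0 ∧ Desc T lvl v (T.parent w) := by
  have hlt : lvl v < lvl w := by
    rcases lt_or_eq_of_le hd.1 with h | h
    · exact h
    · exact absurd (desc_eq hd h.symm) hne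
  have hw0 : w ≠ 0 := ne_zero_of_lvl hlvl0 hlvl (by omega)
  have hpw : lvl (T.parent w) = lvl w - 1 := by have := hlvl w hw0; omega
  refine ⟨hlt, hw0, ⟨by omega, ?_⟩⟩
  have hk : lvl w - lvl v = (lvl (T.parent w) - lvl v) + 1 := by omega
  have := hd.2
  rw [hk, Function.iterate_succ_apply] at this
  exact this

lemma not_desc_of_lvl_lt {v w : Fin (n + 1)} (h : lvl w < lvl v) : ¬ Desc T lvl v w :=
  fun hd => absurd hd.1 (by omega)

lemma desc_unique {v1 v2 w : Fin (n + 1)} (h1 : Desc T lvl v1 w) (h2 : Desc T lvl v2 w)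
    (h : lvl v1 = lvl v2) : v1 = v2 := by
  have := h1.2
  rw [h, h2.2] at this
  exact this.symm

end Desc
set_option linter.unusedSectionVars false

section Main
open ParentTree
variable {n : ℕ} {T : ParentTree n} {lvl : Fin (n + 1) → ℕ} {l : ℕ} {c : ℕ → ℕ}
  {W : ℕ → Polynomial ℝ}
variable (hlvl0 : lvl 0 = 1) (hlvl : ∀ v, v ≠ 0 → lvl v = lvl (T.parent v) + 1)
  (hle : ∀ v, lvl v ≤ l) (hmax : ∃ v, lvl v = l)
  (hc : ∀ v, (T.children v).card = c (lvl v))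
  (hW0 : W 0 = 1) (hW1 : W 1 = Polynomial.X)
  (hWrec : ∀ j, 2 ≤ j → j ≤ l →
    W j = Polynomial.X * W (j - 1) - Polynomial.C ((c (l + 1 - j) : ℝ)) * W (j - 2))

include hlvl0 hlvl hle hmax in
lemma exists_lvl : ∀ m, 1 ≤ m → m ≤ l → ∃ v, lvl v = m := by
  intro m hm1 hm2
  obtain ⟨v0, hv0⟩ := hmax
  refine ⟨T.parent^[l - m] v0, ?_⟩
  rw [lvl_iterate hlvl0 hlvl v0 (l - m) (by omega), hv0]
  omega

include hlvl0 hlvl hle hmax hc in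
lemma c_pos : ∀ m, 1 ≤ m → m ≤ l - 1 → 1 ≤ c m := by
  intro m hm1 hm2
  have hl1 : 1 ≤ l := by
    obtain ⟨v0, hv0⟩ := hmax
    have := lvl_pos hlvl0 hlvl v0; omega
  obtain ⟨v, hv⟩ := exists_lvl hlvl0 hlvl hle hmax (m + 1) (by omega) (by omega)
  have hv0 : v ≠ 0 := ne_zero_of_lvl hlvl0 hlvl (by omega)
  have hmem : v ∈ T.children (T.parent v) :=
    children_mem.mpr ⟨rfl, fun h => absurd (T.parent_lt v hv0) (by rw [← h]; exact lt_irrefl _)⟩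
  have hcard := hc (T.parent v)
  have hlp : lvl (T.parent v) = m := by have := hlvl v hv0; omega
  rw [hlp] at hcard
  have : 0 < (T.children (T.parent v)).card := Finset.card_pos.mpr ⟨v, hmem⟩
  omega

include hlvl hle in
lemma children_empty_top {v : Fin (n + 1)} (h : lvl v = l) : T.children v = ∅ := by
  rw [Finset.eq_empty_iff_forall_notMem]
  intro w hw
  have := lvl_child hlvl hw
  have := hle w
  omega

include hlvl0 hlvl hle hmax hc in
lemma desc_leaf : ∀ v, ∃ z, Desc T lvl v z ∧ lvl z = l := by
  suffices H : ∀ t v, l - lvl v ≤ t → ∃ z, Desc T lvl v z ∧ lvl z = l by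
    intro v; exact H (l - lvl v) v le_rfl
  intro t
  induction t with
  | zero =>
    intro v hv
    have := hle v
    exact ⟨v, desc_self v, by omega⟩
  | succ t ih =>
    intro v hv
    by_cases htop : lvl v = l
    · exact ⟨v, desc_self v, htop⟩
    · have h1 : 1 ≤ lvl v := lvl_pos hlvl0 hlvl v
      have h2 : lvl v ≤ l - 1 := by have := hle v; omega
      have hcv : 1 ≤ c (lvl v) := c_pos hlvl0 hlvl hle hmax hc (lvl v) h1 h2
      have hne : (T.children v).Nonempty := by
        rw [← Finset.card_pos, hc v]; omega
      obtain ⟨w, hw⟩ := hne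
      have hlw : lvl w = lvl v + 1 := lvl_child hlvl hw
      obtain ⟨z, hz1, hz2⟩ := ih w (by omega)
      refine ⟨z, ?_, hz2⟩
      -- transitivity through the child step
      obtain ⟨ha, hb⟩ := hz1
      refine ⟨by omega, ?_⟩
      have hk : lvl z - lvl v = 1 + (lvl z - lvl w) := by omega
      rw [hk, Function.iterate_add_apply, hb]
      simpa using (children_mem.mp hw).1

end Main
section Main2
open ParentTree
variable {n : ℕ} {T : ParentTree n} {lvl : Fin (n + 1) → ℕ} {l : ℕ} {c : ℕ → ℕ}
  {W : ℕ → Polynomial ℝ}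
variable (hlvl0 : lvl 0 = 1) (hlvl : ∀ v, v ≠ 0 → lvl v = lvl (T.parent v) + 1)
  (hle : ∀ v, lvl v ≤ l) (hmax : ∃ v, lvl v = l)
  (hc : ∀ v, (T.children v).card = c (lvl v))
  (hW0 : W 0 = 1) (hW1 : W 1 = Polynomial.X)
  (hWrec : ∀ j, 2 ≤ j → j ≤ l →
    W j = Polynomial.X * W (j - 1) - Polynomial.C ((c (l + 1 - j) : ℝ)) * W (j - 2))

include hlvl hc in
lemma children_sum_const (v : Fin (n + 1)) (F : Fin (n + 1) → ℝ) (a : ℝ)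
    (hF : ∀ w ∈ T.children v, F w = a) :
    (∑ w ∈ T.children v, F w) = (c (lvl v) : ℝ) * a := by
  rw [Finset.sum_congr rfl hF, Finset.sum_const, hc, nsmul_eq_mul]

include hlvl0 hlvl hle hmax hc hW0 hW1 hWrec in
lemma prop_L1 (x : ℝ) (f : Fin (n + 1) → ℝ)
    (heig : ∀ v, (∑ w ∈ T.children v, f w) + (if v = 0 then 0 else f (T.parent v)) = x * f v) :
    ∀ u, (W (l + 1 - lvl u)).eval x * f u
      = (W (l - lvl u)).eval x * (if u = 0 then 0 else f (T.parent u)) := by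
  have htopcase : ∀ u, lvl u = l →
      (W (l + 1 - lvl u)).eval x * f u
        = (W (l - lvl u)).eval x * (if u = 0 then 0 else f (T.parent u)) := by
    intro u htop
    have h := heig u
    rw [children_empty_top hlvl hle htop, Finset.sum_empty] at h
    rw [htop, Nat.sub_self, hW0]
    have h1 : l + 1 - l = 1 := by omega
    rw [h1, hW1]
    simp only [Polynomial.eval_X, Polynomial.eval_one]
    linarith [h]
  suffices H : ∀ t u, l - lvl u ≤ t →
      (W (l + 1 - lvl u)).eval x * f u
        = (W (l - lvl u)).eval x * (if u = 0 then 0 else f (T.parent u)) by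
    intro u; exact H _ u le_rfl
  intro t
  induction t with
  | zero =>
    intro u hu
    exact htopcase u (by have := hle u; omega)
  | succ t ih =>
    intro u hu
    by_cases htop : lvl u = l
    · exact htopcase u htop
    · have h1 : 1 ≤ lvl u := lvl_pos hlvl0 hlvl u
      have h2 : lvl u < l := lt_of_le_of_ne (hle u) htop
      set i := lvl u with hi
      set k := l - i with hk
      have hk1 : 1 ≤ k := by omega
      have hcpos : 1 ≤ c i := c_pos hlvl0 hlvl hle hmax hc i h1 (by omega)
      -- IH at children
      have hch : ∀ w ∈ T.children u,
          (W k).eval x * f w = (W (k - 1)).eval x * f u := by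
        intro w hw
        have hlw : lvl w = i + 1 := lvl_child hlvl hw
        have := ih w (by omega)
        have e1 : l + 1 - lvl w = k := by omega
        have e2 : l - lvl w = k - 1 := by omega
        rw [e1, e2, if_neg (child_ne_zero hw), (children_mem.mp hw).1] at this
        exact this
      have e2 : (W k).eval x * (∑ w ∈ T.children u, f w)
          = (c i : ℝ) * ((W (k - 1)).eval x * f u) := by
        rw [Finset.mul_sum]
        rw [children_sum_const hlvl hc u _ ((W (k - 1)).eval x * f u) hch]
      have hrec := hWrec (k + 1) (by omega) (by omega)
      have e3 : (W (k + 1)).eval x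
          = x * (W k).eval x - (c i : ℝ) * (W (k - 1)).eval x := by
        have i1 : k + 1 - 1 = k := by omega
        have i2 : k + 1 - 2 = k - 1 := by omega
        have i3 : l + 1 - (k + 1) = i := by omega
        rw [i1, i2, i3] at hrec
        have := congrArg (Polynomial.eval x) hrec
        simpa using this
      have hkk : l + 1 - i = k + 1 := by omega
      rw [hkk]
      linear_combination f u * e3 - (W k).eval x * (heig u) + e2

include hlvl0 hlvl hle hmax hc hW0 hW1 hWrec in
lemma conv_L2 (x : ℝ) (f : Fin (n + 1) → ℝ)
    (heig : ∀ v, (∑ w ∈ T.children v, f w) + (if v = 0 then 0 else f (T.parent v)) = x * f v)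
    (hWl : (W l).eval x ≠ 0)
    (hPhi : ∀ k, 1 ≤ k → k ≤ l - 1 → 1 < c (l - k) → (W k).eval x ≠ 0) :
    ∀ u, f u = 0 := by
  have L1 := prop_L1 hlvl0 hlvl hle hmax hc hW0 hW1 hWrec x f heig
  suffices H : ∀ i u, lvl u ≤ i → f u = 0 by intro u; exact H (lvl u) u le_rfl
  intro i
  induction i with
  | zero => intro u hu; exact absurd (lvl_pos hlvl0 hlvl u) (by omega)
  | succ i ih =>
    intro u hu
    by_cases h0 : u = 0
    · subst h0
      have h := L1 0
      rw [hlvl0, if_pos rfl, mul_zero] at h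
      have e : l + 1 - 1 = l := by omega
      rw [e] at h
      rcases mul_eq_zero.mp h with h | h
      · exact absurd h hWl
      · exact h
    · by_cases hlu : lvl u ≤ i
      · exact ih u hlu
      · have hlu' : lvl u = i + 1 := by omega
        have h2 : 2 ≤ lvl u := by
          have := hlvl u h0; have := lvl_pos hlvl0 hlvl (T.parent u); omega
        have hp : lvl (T.parent u) = lvl u - 1 := by have := hlvl u h0; omega
        have hfp : f (T.parent u) = 0 := ih _ (by omega)
        have h := L1 u
        rw [if_neg h0, hfp, mul_zero] at h
        by_cases hom : (W (l + 1 - lvl u)).eval x = 0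
        · have hlul : lvl u ≤ l := hle u
          have hk1 : 1 ≤ l + 1 - lvl u := by omega
          have hk2 : l + 1 - lvl u ≤ l - 1 := by omega
          have hcle : ¬ (1 < c (l - (l + 1 - lvl u))) := fun hcc => (hPhi _ hk1 hk2 hcc) hom
          have hidx : l - (l + 1 - lvl u) = lvl u - 1 := by omega
          rw [hidx] at hcle
          have hcge : 1 ≤ c (lvl u - 1) :=
            c_pos hlvl0 hlvl hle hmax hc _ (by omega) (by omega)
          have hcard : (T.children (T.parent u)).card = 1 := by rw [hc, hp]; omega
          have humem : u ∈ T.children (T.parent u) :=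
            children_mem.mpr ⟨rfl, fun hh =>
              absurd (T.parent_lt u h0) (by rw [← hh]; exact lt_irrefl _)⟩
          obtain ⟨a, ha⟩ := Finset.card_eq_one.mp hcard
          have hau : u = a := by rw [ha] at humem; simpa using humem
          rw [← hau] at ha
          have hp2 := heig (T.parent u)
          rw [ha, Finset.sum_singleton] at hp2
          have hfpp : (if T.parent u = 0 then (0:ℝ) else f (T.parent (T.parent u))) = 0 := by
            by_cases hpp : T.parent u = 0
            · simp [hpp]
            · have hppl : lvl (T.parent (T.parent u)) = lvl u - 2 := by
                have := hlvl (T.parent u) hpp; omega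
            
              rw [if_neg hpp]
              exact ih _ (by omega)
          rw [hfpp, hfp] at hp2
          linarith [hp2]
        · rcases mul_eq_zero.mp h with h | h
          · exact absurd h hom
          · exact h

end Main2
section Main3
open ParentTree
variable {n : ℕ} {T : ParentTree n} {lvl : Fin (n + 1) → ℕ} {l : ℕ} {c : ℕ → ℕ}
  {W : ℕ → Polynomial ℝ}
variable (hlvl0 : lvl 0 = 1) (hlvl : ∀ v, v ≠ 0 → lvl v = lvl (T.parent v) + 1)
  (hle : ∀ v, lvl v ≤ l) (hmax : ∃ v, lvl v = l)
  (hc : ∀ v, (T.children v).card = c (lvl v))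
  (hW0 : W 0 = 1) (hW1 : W 1 = Polynomial.X)
  (hWrec : ∀ j, 2 ≤ j → j ≤ l →
    W j = Polynomial.X * W (j - 1) - Polynomial.C ((c (l + 1 - j) : ℝ)) * W (j - 2))

include hlvl0 hlvl hle hmax hc hW0 hW1 hWrec in
lemma forward_top (x : ℝ) (hx : (W l).eval x = 0) :
    ∃ f : Fin (n + 1) → ℝ, f ≠ 0 ∧
      ∀ v, (∑ w ∈ T.children v, f w) + (if v = 0 then 0 else f (T.parent v)) = x * f v := by
  refine ⟨fun v => (W (l - lvl v)).eval x, ?_, ?_⟩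
  · obtain ⟨v0, hv0⟩ := hmax
    intro hzero
    have := congrFun hzero v0
    rw [hv0, Nat.sub_self, hW0] at this
    simpa using this
  · intro v
    show (∑ w ∈ T.children v, (W (l - lvl w)).eval x)
        + (if v = 0 then 0 else (W (l - lvl (T.parent v))).eval x)
        = x * (W (l - lvl v)).eval x
    have h1 : 1 ≤ lvl v := lvl_pos hlvl0 hlvl v
    have h2 : lvl v ≤ l := hle v
    by_cases htop : lvl v = l
    · rw [children_empty_top hlvl hle htop, Finset.sum_empty, htop, Nat.sub_self, hW0]
      by_cases hv : v = 0
      · have hl1 : l = 1 := by rw [hv, hlvl0] at htop; omega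
        rw [if_pos hv]
        have hx0 : x = 0 := by rw [hl1, hW1] at hx; simpa using hx
        simp [hx0]
      · rw [if_neg hv]
        have hp : lvl (T.parent v) = l - 1 := by have := hlvl v hv; omega
        rw [hp]
        have e1 : l - (l - 1) = 1 := by omega
        rw [e1, hW1]
        simp
    · have hlt : lvl v < l := by omega
      have hsum : (∑ w ∈ T.children v, (W (l - lvl w)).eval x)
          = (c (lvl v) : ℝ) * (W (l - lvl v - 1)).eval x := by
        apply children_sum_const hlvl hc
        intro w hw
        have hlw := lvl_child hlvl hw
        have e : l - lvl w = l - lvl v - 1 := by omega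
        rw [e]
      rw [hsum]
      by_cases hv : v = 0
      · rw [if_pos hv]
        have hlv : lvl v = 1 := by rw [hv, hlvl0]
        have hl2 : 2 ≤ l := by omega
        have hrec := hWrec l (by omega) le_rfl
        have e : (W l).eval x = x * (W (l - 1)).eval x - (c 1 : ℝ) * (W (l - 2)).eval x := by
          have i3 : l + 1 - l = 1 := by omega
          rw [i3] at hrec
          have := congrArg (Polynomial.eval x) hrec
          simpa using this
        rw [hlv]
        have i1 : l - 1 - 1 = l - 2 := by omega
        rw [i1]
        linear_combination e - hx
      · rw [if_neg hv]
        have h2' : 2 ≤ lvl v := by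
          have := hlvl v hv; have := lvl_pos hlvl0 hlvl (T.parent v); omega
        have hp : lvl (T.parent v) = lvl v - 1 := by have := hlvl v hv; omega
        rw [hp]
        set i := lvl v with hi
        have hrec := hWrec (l - i + 1) (by omega) (by omega)
        have e : (W (l - i + 1)).eval x
            = x * (W (l - i)).eval x - (c i : ℝ) * (W (l - i - 1)).eval x := by
          have i1 : l - i + 1 - 1 = l - i := by omega
          have i2 : l - i + 1 - 2 = l - i - 1 := by omega
          have i3 : l + 1 - (l - i + 1) = i := by omega
          rw [i1, i2, i3] at hrec
          have := congrArg (Polynomial.eval x) hrec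
          simpa using this
        have i4 : l - (i - 1) = l - i + 1 := by omega
        rw [i4]
        linear_combination e

end Main3
instance {n : ℕ} {T : ParentTree n} {lvl : Fin (n + 1) → ℕ} (v w : Fin (n + 1)) :
    Decidable (Desc T lvl v w) :=
  decidable_of_iff (lvl v ≤ lvl w ∧ T.parent^[lvl w - lvl v] w = v) Iff.rfl

section Main4
open ParentTree
variable {n : ℕ} {T : ParentTree n} {lvl : Fin (n + 1) → ℕ} {l : ℕ} {c : ℕ → ℕ}
  {W : ℕ → Polynomial ℝ}
variable (hlvl0 : lvl 0 = 1) (hlvl : ∀ v, v ≠ 0 → lvl v = lvl (T.parent v) + 1)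
  (hle : ∀ v, lvl v ≤ l) (hmax : ∃ v, lvl v = l)
  (hc : ∀ v, (T.children v).card = c (lvl v))
  (hW0 : W 0 = 1) (hW1 : W 1 = Polynomial.X)
  (hWrec : ∀ j, 2 ≤ j → j ≤ l →
    W j = Polynomial.X * W (j - 1) - Polynomial.C ((c (l + 1 - j) : ℝ)) * W (j - 2))

include hlvl0 hlvl hle hmax hc hW0 hW1 hWrec in
lemma forward_sub (x : ℝ) (j : ℕ) (hj1 : 1 ≤ j) (hj2 : j ≤ l - 1) (hj3 : 1 < c (l - j))
    (hx : (W j).eval x = 0) :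
    ∃ f : Fin (n + 1) → ℝ, f ≠ 0 ∧
      ∀ v, (∑ w ∈ T.children v, f w) + (if v = 0 then 0 else f (T.parent v)) = x * f v := by
  have hl2 : 2 ≤ l := by omega
  obtain ⟨u, hu⟩ := exists_lvl hlvl0 hlvl hle hmax (l - j) (by omega) (by omega)
  have hcard : 1 < (T.children u).card := by rw [hc, hu]; exact hj3
  obtain ⟨v1, hv1, v2, hv2, hv12⟩ := Finset.one_lt_card.mp hcard
  set g : Fin (n + 1) → Fin (n + 1) → ℝ :=
    fun v0 w => if Desc T lvl v0 w then (W (l - lvl w)).eval x else 0 with hg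
  have hlv1 : lvl v1 = l - j + 1 := by rw [lvl_child hlvl hv1, hu]
  have hlv2 : lvl v2 = l - j + 1 := by rw [lvl_child hlvl hv2, hu]
  have key : ∀ v0 ∈ T.children u, ∀ w,
      (∑ ch ∈ T.children w, g v0 ch) + (if w = 0 then 0 else g v0 (T.parent w))
        = x * g v0 w + (if w = u then (W (j - 1)).eval x else 0) := by
    intro v0 hv0 w
    have hpv0 : T.parent v0 = u := (children_mem.mp hv0).1
    have hlv0 : lvl v0 = l - j + 1 := by rw [lvl_child hlvl hv0, hu]
    have hv02 : 2 ≤ lvl v0 := by omega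
    by_cases hd : Desc T lvl v0 w
    · have hlw1 : lvl v0 ≤ lvl w := hd.1
      have hwle : lvl w ≤ l := hle w
      have hwu : w ≠ u := by rintro rfl; omega
      rw [if_neg hwu]
      have hw0 : w ≠ 0 := ne_zero_of_lvl hlvl0 hlvl (by omega)
      rw [if_neg hw0]
      have hgw : g v0 w = (W (l - lvl w)).eval x := if_pos hd
      rw [hgw]
      by_cases hwv : w = v0
      · subst hwv
        rw [hpv0]
        have hgu : g w u = 0 := if_neg (not_desc_of_lvl_lt (by omega))
        rw [hgu]
        by_cases hj1' : j = 1
        · have hlvw : lvl w = l := by omega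
          rw [children_empty_top hlvl hle hlvw, Finset.sum_empty, hlvw, Nat.sub_self, hW0]
          have hx0 : x = 0 := by rw [hj1', hW1] at hx; simpa using hx
          simp [hx0]
        · have hwlt : lvl w < l := by omega
          have hsum : (∑ ch ∈ T.children w, g w ch)
              = (c (lvl w) : ℝ) * (W (l - lvl w - 1)).eval x := by
            apply children_sum_const hlvl hc
            intro ch hch
            have hdch : Desc T lvl w ch := desc_child hlvl hd hch
            have hlch := lvl_child hlvl hch
            have e : l - lvl ch = l - lvl w - 1 := by omega
            rw [hg]
            simp only [if_pos hdch, e]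
          rw [hsum]
          have hrec := hWrec j (by omega) (by omega)
          have e : (W j).eval x
              = x * (W (j - 1)).eval x - (c (l + 1 - j) : ℝ) * (W (j - 2)).eval x := by
            have := congrArg (Polynomial.eval x) hrec
            simpa using this
          have e1 : lvl w = l + 1 - j := by omega
          have e2 : l - lvl w = j - 1 := by omega
          have e3 : l - lvl w - 1 = j - 2 := by omega
          rw [e3, e2, e1]
          linear_combination e - hx
      · obtain ⟨hltv, hw0', hdp⟩ := desc_up hlvl0 hlvl hd hwv (by omega)
        have hgp : g v0 (T.parent w) = (W (l - lvl (T.parent w))).eval x := if_pos hdp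
        have hplvl : lvl (T.parent w) = lvl w - 1 := by have := hlvl w hw0; omega
        rw [hgp, hplvl]
        by_cases htop : lvl w = l
        · rw [children_empty_top hlvl hle htop, Finset.sum_empty, htop, Nat.sub_self, hW0]
          have e1 : l - (l - 1) = 1 := by omega
          rw [e1, hW1]
          simp
        · have hwlt : lvl w < l := by omega
          have hsum : (∑ ch ∈ T.children w, g v0 ch)
              = (c (lvl w) : ℝ) * (W (l - lvl w - 1)).eval x := by
            apply children_sum_const hlvl hc
            intro ch hch
            have hdch : Desc T lvl v0 ch := desc_child hlvl hd hch
            have hlch := lvl_child hlvl hch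
            have e : l - lvl ch = l - lvl w - 1 := by omega
            rw [hg]
            simp only [if_pos hdch, e]
          rw [hsum]
          have hrec := hWrec (l - lvl w + 1) (by omega) (by omega)
          have e : (W (l - lvl w + 1)).eval x
              = x * (W (l - lvl w)).eval x - (c (lvl w) : ℝ) * (W (l - lvl w - 1)).eval x := by
            have i1 : l - lvl w + 1 - 1 = l - lvl w := by omega
            have i2 : l - lvl w + 1 - 2 = l - lvl w - 1 := by omega
            have i3 : l + 1 - (l - lvl w + 1) = lvl w := by omega
            rw [i1, i2, i3] at hrec
            have := congrArg (Polynomial.eval x) hrec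
            simpa using this
          have i4 : l - (lvl w - 1) = l - lvl w + 1 := by omega
          rw [i4]
          linear_combination e
    · by_cases hwu : w = u
      · subst hwu
        have hgu : g v0 w = 0 := if_neg hd
        have hsum : (∑ ch ∈ T.children w, g v0 ch) = (W (j - 1)).eval x := by
          rw [Finset.sum_eq_single_of_mem v0 hv0 ?_]
          · have e : l - lvl v0 = j - 1 := by omega
            rw [hg]
            simp only [if_pos (desc_self v0), e]
          · intro b hb hbne
            apply if_neg
            intro hdb
            exact hbne (desc_eq hdb (by rw [lvl_child hlvl hb, hlv0, hu]))
        have hpt : (if w = 0 then (0:ℝ) else g v0 (T.parent w)) = 0 := by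
          by_cases hu0 : w = 0
          · simp [hu0]
          · have hplvl : lvl (T.parent w) = lvl w - 1 := by have := hlvl w hu0; omega
            rw [if_neg hu0]
            exact if_neg (not_desc_of_lvl_lt (by omega))
        rw [hsum, hpt, hgu, if_pos rfl]
        ring
      · rw [if_neg hwu]
        have hgw : g v0 w = 0 := if_neg hd
        have hsum : (∑ ch ∈ T.children w, g v0 ch) = 0 := by
          apply Finset.sum_eq_zero
          intro ch hch
          apply if_neg
          intro hdch
          by_cases hchv : ch = v0
          · subst hchv
            exact hwu (by rw [← (children_mem.mp hch).1, hpv0])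
          · have hup := desc_up hlvl0 hlvl hdch hchv (by omega)
            have := hup.2.2
            rw [(children_mem.mp hch).1] at this
            exact hd this
        have hpt : (if w = 0 then (0:ℝ) else g v0 (T.parent w)) = 0 := by
          by_cases hw0 : w = 0
          · simp [hw0]
          · rw [if_neg hw0]
            apply if_neg
            intro hdp
            have hwch : w ∈ T.children (T.parent w) :=
              children_mem.mpr ⟨rfl, fun hh =>
                absurd (T.parent_lt w hw0) (by rw [← hh]; exact lt_irrefl _)⟩
            exact hd (desc_child hlvl hdp hwch)
        rw [hsum, hpt, hgw]
        ring
  refine ⟨fun w => g v1 w - g v2 w, ?_, ?_⟩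
  · obtain ⟨z, hz1, hz2⟩ := desc_leaf hlvl0 hlvl hle hmax hc v1
    intro hzero
    have hzz := congrFun hzero z
    have hg1 : g v1 z = 1 := by
      rw [hg]
      simp only [if_pos hz1, hz2, Nat.sub_self, hW0]
      simp
    have hg2 : g v2 z = 0 := by
      rw [hg]
      apply if_neg
      intro hdz
      exact hv12 (desc_unique hz1 hdz (by rw [hlv1, hlv2]))
    rw [hg1, hg2] at hzz
    simpa using hzz
  · intro v
    have k1 := key v1 hv1 v
    have k2 := key v2 hv2 v
    show (∑ w ∈ T.children v, (g v1 w - g v2 w))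
        + (if v = 0 then 0 else (g v1 (T.parent v) - g v2 (T.parent v)))
        = x * (g v1 v - g v2 v)
    have hite : (if v = 0 then (0:ℝ) else (g v1 (T.parent v) - g v2 (T.parent v)))
        = (if v = 0 then 0 else g v1 (T.parent v)) - (if v = 0 then 0 else g v2 (T.parent v)) := by
      split <;> ring
    rw [Finset.sum_sub_distrib, hite]
    linear_combination k1 - k2

end Main4
theorem stmt_10 {n : ℕ} (T : ParentTree n)
    (lvl : Fin (n + 1) → ℕ)
    (hlvl0 : lvl 0 = 1)
    (hlvl : ∀ v, v ≠ 0 → lvl v = lvl (T.parent v) + 1)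
    (l : ℕ)
    (hle : ∀ v, lvl v ≤ l) (hmax : ∃ v, lvl v = l)
    (c : ℕ → ℕ)
    (hc : ∀ v, (T.children v).card = c (lvl v))
    (W : ℕ → Polynomial ℝ)
    (hW0 : W 0 = 1) (hW1 : W 1 = Polynomial.X)
    (hWrec : ∀ j, 2 ≤ j → j ≤ l → W j = Polynomial.X * W (j - 1) - Polynomial.C ((c (l + 1 - j) : ℝ)) * W (j - 2)) :
    {x : ℝ | (T.adjMat ℝ).charpoly.IsRoot x} =
      ⋃ j ∈ ({l} ∪ {j | 1 ≤ j ∧ j ≤ l - 1 ∧ 1 < c (l - j)} : Set ℕ),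
        {x : ℝ | (W j).IsRoot x} := by
  ext x
  simp only [Set.mem_setOf_eq, Set.mem_iUnion, Set.mem_union, Set.mem_singleton_iff,
    exists_prop]
  rw [charpoly_root_iff]
  constructor
  · rintro ⟨f, hf0, hfe⟩
    have heig : ∀ v, (∑ w ∈ T.children v, f w) + (if v = 0 then 0 else f (T.parent v))
        = x * f v := by
      intro v
      have h := congrFun hfe v
      rw [adj_mulVec] at h
      simpa using h
    by_contra hcon
    push_neg at hcon
    have hWl : (W l).eval x ≠ 0 := hcon l (Or.inl rfl)
    have hPhi : ∀ k, 1 ≤ k → k ≤ l - 1 → 1 < c (l - k) → (W k).eval x ≠ 0 :=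
      fun k h1 h2 h3 => hcon k (Or.inr ⟨h1, h2, h3⟩)
    exact hf0 (funext (conv_L2 hlvl0 hlvl hle hmax hc hW0 hW1 hWrec x f heig hWl hPhi))
  · rintro ⟨j, hj, hroot⟩
    have hex : ∃ f : Fin (n + 1) → ℝ, f ≠ 0 ∧
        ∀ v, (∑ w ∈ T.children v, f w) + (if v = 0 then 0 else f (T.parent v)) = x * f v := by
      rcases hj with rfl | ⟨h1, h2, h3⟩
      · exact forward_top hlvl0 hlvl hle hmax hc hW0 hW1 hWrec x hroot
      · exact forward_sub hlvl0 hlvl hle hmax hc hW0 hW1 hWrec x j h1 h2 h3 hroot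
    obtain ⟨f, hf0, heig⟩ := hex
    refine ⟨f, hf0, ?_⟩
    funext v
    rw [adj_mulVec, heig v]
    simp
end

section
/- Let B_{d,k} be the Bethe tree with k levels in which every non-leaf vertex has d-1 children (d ≥ 2, k ≥ 1), and let E_j(x,a) denote the Dickson polynomials of the second kind with E_0 = 1, E_1 = x, E_j = x·E_{j-1} - a·E_{j-2}. Then the characteristic polynomial of the adjacency matrix of B_{d,k} equals E_k(x,d-1)·∏_{j=1}^{k-1} E_j(x,d-1)^{(d-2)(d-1)^{k-1-j}}. -/
open Polynomial

/-- Dickson polynomials of the second kind with parameter `a`. -/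
noncomputable def dicksonE (a : ℚ) : ℕ → Polynomial ℚ
  | 0 => 1
  | 1 => Polynomial.X
  | (j + 2) => Polynomial.X * dicksonE a (j + 1) - Polynomial.C a * dicksonE a j

open Finset Matrix

lemma dicksonE_spec (a : ℚ) : ∀ m, (dicksonE a m).Monic ∧ (dicksonE a m).natDegree = m := by
  intro m
  induction m using Nat.strong_induction_on with
  | _ m ih =>
    match m with
    | 0 => refine ⟨?_, ?_⟩ <;> simp [dicksonE, monic_one]
    | 1 => refine ⟨?_, ?_⟩ <;> simp [dicksonE, monic_X]
    | (j+2) =>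
      obtain ⟨h1, d1⟩ := ih (j+1) (by omega)
      obtain ⟨h0, d0⟩ := ih j (by omega)
      have hm : (X * dicksonE a (j+1)).Monic := monic_X.mul h1
      have hnd : (X * dicksonE a (j+1)).natDegree = j+2 := by
        rw [natDegree_mul X_ne_zero h1.ne_zero, natDegree_X, d1]; omega
      have hdeg : (X * dicksonE a (j+1)).degree = ((j+2 : ℕ) : WithBot ℕ) := by
        rw [degree_eq_natDegree hm.ne_zero, hnd]
      have hq : (C a * dicksonE a j).degree < (X * dicksonE a (j+1)).degree := by
        rw [hdeg]
        refine lt_of_le_of_lt (degree_le_natDegree.trans ?_)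
          ((Nat.cast_lt (α := WithBot ℕ)).mpr (by omega : j < j + 2))
        exact_mod_cast le_trans natDegree_mul_le (by simp [natDegree_C, d0])
      have heq : dicksonE a (j+2) = X * dicksonE a (j+1) - C a * dicksonE a j := rfl
      constructor
      · rw [heq, sub_eq_add_neg]
        exact hm.add_of_left (by rwa [degree_neg])
      · rw [heq]
        exact natDegree_eq_of_degree_eq_some ((degree_sub_eq_left_of_degree_lt hq).trans hdeg)

lemma dicksonE_ne_zero (a : ℚ) (m : ℕ) : dicksonE a m ≠ 0 := (dicksonE_spec a m).1.ne_zero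

lemma prod_Icc_to_range {M : Type*} [CommMonoid M] (f : ℕ → M) (k : ℕ) :
    ∏ j ∈ Finset.Icc 1 k, f j = ∏ i ∈ Finset.range k, f (1 + i) := by
  rw [← Finset.Ico_add_one_right_eq_Icc, Finset.prod_Ico_eq_prod_range]
  norm_num

lemma poly_id (a : ℚ) (d k : ℕ) (hd : 2 ≤ d) (hk : 1 ≤ k) :
    (∏ j ∈ Finset.Icc 1 k, dicksonE a (k+1-j) ^ ((d-1)^(j-1))) =
    (dicksonE a k * ∏ j ∈ Finset.Icc 1 (k-1), dicksonE a j ^ ((d-2)*(d-1)^(k-1-j))) *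
    ∏ j ∈ Finset.Icc 1 k, dicksonE a (k-j) ^ ((d-1)^(j-1)) := by
  obtain ⟨k, rfl⟩ : ∃ k', k = k' + 1 := ⟨k - 1, by omega⟩
  obtain ⟨e, rfl⟩ : ∃ e, d = e + 2 := ⟨d - 2, by omega⟩
  simp only [prod_Icc_to_range, Nat.add_sub_cancel]
  have hA : ∏ i ∈ Finset.range (k+1), dicksonE a (k+1+1-(1+i)) ^ ((e+2-1)^(1+i-1)) =
      (∏ i ∈ Finset.range k, dicksonE a (i+1) ^ ((e+1)^(k-i))) * dicksonE a (k+1) := by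
    rw [← Finset.prod_range_reflect, Finset.prod_range_succ]
    congr 1
    · refine Finset.prod_congr rfl fun i hi => ?_
      have hik : i < k := Finset.mem_range.mp hi
      congr 1
      · congr 1; omega
      · congr 1 <;> omega
    · rw [show k+1+1-(1+(k+1-1-k)) = k+1 by omega, show (e+2-1)^(1+(k+1-1-k)-1) = 1 by
        rw [show 1+(k+1-1-k)-1 = 0 by omega, pow_zero], pow_one]
  have hB : ∏ i ∈ Finset.range (k+1), dicksonE a (k+1-(1+i)) ^ ((e+2-1)^(1+i-1)) =
      ∏ i ∈ Finset.range k, dicksonE a (i+1) ^ ((e+1)^(k-(i+1))) := by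
    rw [← Finset.prod_range_reflect, Finset.prod_range_succ']
    have h0 : dicksonE a (k+1-(1+(k+1-1-0))) ^ ((e+2-1)^(1+(k+1-1-0)-1)) = 1 := by
      rw [show k+1-(1+(k+1-1-0)) = 0 by omega, show dicksonE a 0 = 1 from rfl, one_pow]
    rw [h0, mul_one]
    refine Finset.prod_congr rfl fun i hi => ?_
    have hik : i < k := Finset.mem_range.mp hi
    congr 1
    · congr 1; omega
    · congr 1 <;> omega
  rw [hA, hB]
  have hC : ∏ i ∈ Finset.range k, dicksonE a (i+1) ^ ((e+1)^(k-i)) =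
      (∏ i ∈ Finset.range k, dicksonE a (1+i) ^ (e*(e+2-1)^(k-(1+i)))) *
      ∏ i ∈ Finset.range k, dicksonE a (i+1) ^ ((e+1)^(k-(i+1))) := by
    rw [← Finset.prod_mul_distrib]
    refine Finset.prod_congr rfl fun i hi => ?_
    have hik : i < k := Finset.mem_range.mp hi
    rw [show 1+i = i+1 by omega, ← pow_add]
    congr 1
    rw [show e+2-1 = e+1 by omega, show k - i = (k-(i+1)) + 1 by omega, pow_succ]
    ring
  rw [hC]
  ring

noncomputable def phiRF : Polynomial ℚ →+* RatFunc ℚ := algebraMap _ _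

lemma phiRF_inj : Function.Injective phiRF := RatFunc.algebraMap_injective ℚ

noncomputable def EK (a : ℚ) (m : ℕ) : RatFunc ℚ := phiRF (dicksonE a m)

lemma EK_ne_zero (a : ℚ) (m : ℕ) : EK a m ≠ 0 := fun h =>
  dicksonE_ne_zero a m (phiRF_inj (by rw [map_zero]; exact h))

lemma EK_zero (a : ℚ) : EK a 0 = 1 := by
  rw [EK, show dicksonE a 0 = 1 from rfl, _root_.map_one]

lemma EK_one (a : ℚ) : EK a 1 = phiRF X := rfl

lemma EK_rec (a : ℚ) (s : ℕ) :
    EK a (s+2) = phiRF X * EK a (s+1) - phiRF (C a) * EK a s := by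
  rw [EK, show dicksonE a (s+2) = X * dicksonE a (s+1) - C a * dicksonE a s from rfl,
    map_sub, _root_.map_mul, _root_.map_mul]; rfl

/-- `r` value at a vertex of level `lv`. -/
noncomputable def rfun (a : ℚ) (k lv : ℕ) : RatFunc ℚ := EK a (k+1-lv) / EK a (k-lv)

lemma rfun_ne_zero (a : ℚ) (k lv : ℕ) : rfun a k lv ≠ 0 :=
  div_ne_zero (EK_ne_zero _ _) (EK_ne_zero _ _)

lemma rfun_leaf (a : ℚ) (k : ℕ) : rfun a k k = phiRF X := by
  rw [rfun, show k+1-k = 1 by omega, Nat.sub_self, EK_zero, div_one, EK_one]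

lemma rfun_diag (d k lv : ℕ) (hd : 2 ≤ d) (hlt : lv < k) :
    rfun ((d:ℚ)-1) k lv + ((d-1 : ℕ) : RatFunc ℚ) * (rfun ((d:ℚ)-1) k (lv+1))⁻¹
      = phiRF X := by
  set a : ℚ := (d:ℚ)-1 with ha
  obtain ⟨s, hs⟩ : ∃ s, k - lv = s + 1 := ⟨k - lv - 1, by omega⟩
  have h1 : k + 1 - lv = s + 2 := by omega
  have h2 : k + 1 - (lv+1) = s + 1 := by omega
  have h3 : k - (lv+1) = s := by omega
  rw [rfun, rfun, h1, hs, h2, h3, inv_div]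
  have hcast : ((d-1:ℕ) : RatFunc ℚ) = phiRF (C a) := by
    rw [ha, show ((d:ℚ)-1) = ((d-1:ℕ) : ℚ) by push_cast [Nat.cast_sub (by omega : 1 ≤ d)]; ring,
      C_eq_natCast, map_natCast]
  rw [hcast]
  have e1 := EK_ne_zero a s
  have e2 := EK_ne_zero a (s+1)
  have e3 := EK_ne_zero a (s+2)
  field_simp
  rw [EK_rec]
  ring

section main
variable {n : ℕ} (T : ParentTree n)

lemma mem_children {c v : Fin (n+1)} : c ∈ T.children v ↔ T.parent c = v ∧ c ≠ v := by
  simp [ParentTree.children]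

lemma children_ne_zero {c v : Fin (n+1)} (hc : c ∈ T.children v) : c ≠ 0 := by
  rintro rfl
  obtain ⟨h1, h2⟩ := (mem_children T).mp hc
  rw [T.parent_zero] at h1
  exact h2 h1

lemma parent_not_both {i j : Fin (n+1)} (hij : i ≠ j) (h1 : T.parent i = j)
    (h2 : T.parent j = i) : False := by
  by_cases hi : i = 0
  · subst hi; rw [T.parent_zero] at h1; exact hij h1
  by_cases hj : j = 0
  · subst hj; rw [T.parent_zero] at h2; exact hij h2.symm
  have l1 := T.parent_lt i hi
  have l2 := T.parent_lt j hj
  rw [h1] at l1; rw [h2] at l2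
  exact absurd l1 (not_lt_of_gt l2)

/-- The unitriangular matrix used in the `U D Uᵀ` factorization. -/
noncomputable def Umat (r : Fin (n+1) → RatFunc ℚ) :
    Matrix (Fin (n+1)) (Fin (n+1)) (RatFunc ℚ) :=
  Matrix.of fun i j => if i = j then 1 else if T.parent j = i ∧ j ≠ i then -(r j)⁻¹ else 0

lemma Umat_tri (r : Fin (n+1) → RatFunc ℚ) : (Umat T r).BlockTriangular id := by
  intro i j hji
  simp only [id] at hji
  have hij : ¬ (i = j) := fun h => lt_irrefl _ (h ▸ hji)
  have hpj : ¬ (T.parent j = i ∧ j ≠ i) := by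
    rintro ⟨hp, hne⟩
    by_cases hj : j = 0
    · subst hj; rw [T.parent_zero] at hp
      exact absurd hji (by rw [← hp]; exact lt_irrefl _)
    · exact absurd hji (not_lt_of_gt (hp ▸ T.parent_lt j hj))
  simp [Umat, hij, hpj]

lemma Umat_det (r : Fin (n+1) → RatFunc ℚ) : (Umat T r).det = 1 := by
  rw [Matrix.det_of_upperTriangular (Umat_tri T r)]
  apply Finset.prod_eq_one
  intro i _
  simp [Umat]

end main

section factor
variable {n : ℕ} (T : ParentTree n) (lvl : Fin (n + 1) → ℕ) (d k : ℕ)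

lemma child_lvl (hlvl : ∀ v, v ≠ 0 → lvl v = lvl (T.parent v) + 1)
    {c v : Fin (n+1)} (hc : c ∈ T.children v) : lvl c = lvl v + 1 := by
  rw [hlvl c (children_ne_zero T hc), ((mem_children T).mp hc).1]

lemma factor
    (hlvl0 : lvl 0 = 1) (hlvl : ∀ v, v ≠ 0 → lvl v = lvl (T.parent v) + 1)
    (hd : 2 ≤ d) (hk : 1 ≤ k) (hle : ∀ v, lvl v ≤ k)
    (hbethe : ∀ v, lvl v < k → (T.children v).card = d - 1)
    (hleaf : ∀ v, lvl v = k → (T.children v).card = 0) :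
    (charmatrix (T.adjMat ℚ)).map phiRF =
      Umat T (fun v => rfun ((d:ℚ)-1) k (lvl v)) *
        Matrix.diagonal (fun v => rfun ((d:ℚ)-1) k (lvl v)) *
        (Umat T (fun v => rfun ((d:ℚ)-1) k (lvl v)))ᵀ := by
  set a : ℚ := (d:ℚ) - 1 with ha
  set r : Fin (n+1) → RatFunc ℚ := fun v => rfun a k (lvl v) with hr
  have hrne : ∀ v, r v ≠ 0 := fun v => rfun_ne_zero a k (lvl v)
  ext i j
  rw [Matrix.map_apply, Matrix.mul_apply]
  simp only [Matrix.mul_diagonal, Matrix.transpose_apply]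
  by_cases hij : i = j
  · subst hij
    have hLHS : charmatrix (T.adjMat ℚ) i i = X := by
      rw [charmatrix_apply_eq, show T.adjMat ℚ i i = 0 by simp [ParentTree.adjMat], map_zero,
        sub_zero]
    rw [hLHS]
    have hzero : ∀ v ∈ Finset.univ, v ∉ insert i (T.children i) →
        Umat T r i v * r v * Umat T r i v = 0 := by
      intro v _ hv
      simp only [Finset.mem_insert, not_or] at hv
      have h1 : ¬ (i = v) := fun h => hv.1 h.symm
      have h2 : ¬ (T.parent v = i ∧ v ≠ i) := fun h => hv.2 ((mem_children T).mpr h)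
      simp [Umat, h1, h2]
    rw [show (∑ v, Umat T r i v * r v * Umat T r i v)
        = ∑ v ∈ insert i (T.children i), Umat T r i v * r v * Umat T r i v from
      (Finset.sum_subset (Finset.subset_univ _) hzero).symm]
    rw [Finset.sum_insert (fun h => (((mem_children T).mp h).2 rfl))]
    rw [show Umat T r i i = 1 by simp [Umat], one_mul, mul_one]
    have hterm : ∀ c ∈ T.children i, Umat T r i c * r c * Umat T r i c
        = (rfun a k (lvl i + 1))⁻¹ := by
      intro c hc
      obtain ⟨hp, hne⟩ := (mem_children T).mp hc
      have hcl : lvl c = lvl i + 1 := child_lvl T lvl hlvl hc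
      have h1 : ¬ (i = c) := fun h => hne h.symm
      rw [show Umat T r i c = -(r c)⁻¹ by simp [Umat, h1, hp, hne]]
      have hc0 : r c ≠ 0 := hrne c
      rw [hr]
      simp only
      rw [hcl]
      rw [hr] at hc0
      simp only at hc0
      rw [hcl] at hc0
      field_simp
    rw [Finset.sum_congr rfl hterm, Finset.sum_const]
    rcases eq_or_lt_of_le (hle i) with hik | hik
    · rw [hleaf i hik, zero_smul, add_zero]
      show phiRF X = rfun a k (lvl i)
      rw [hik]
      exact (rfun_leaf a k).symm
    · rw [hbethe i hik, nsmul_eq_mul]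
      exact (rfun_diag d k (lvl i) hd hik).symm
  · have hLHS : charmatrix (T.adjMat ℚ) i j = -C (T.adjMat ℚ i j) :=
      charmatrix_apply_ne _ _ _ hij
    have hzero : ∀ v ∈ Finset.univ, v ∉ ({i, j} : Finset (Fin (n+1))) →
        Umat T r i v * r v * Umat T r j v = 0 := by
      intro v _ hv
      simp only [Finset.mem_insert, Finset.mem_singleton, not_or] at hv
      have h1 : ¬ (i = v) := fun h => hv.1 h.symm
      have h2 : ¬ (j = v) := fun h => hv.2 h.symm
      by_cases hpi : T.parent v = i ∧ v ≠ i
      · by_cases hpj : T.parent v = j ∧ v ≠ j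
        · exact absurd (hpi.1.symm.trans hpj.1) hij
        · simp [Umat, h1, h2, hpj]
      · simp [Umat, h1, hpi]
    rw [show (∑ v, Umat T r i v * r v * Umat T r j v)
        = ∑ v ∈ ({i, j} : Finset (Fin (n+1))), Umat T r i v * r v * Umat T r j v from
      (Finset.sum_subset (Finset.subset_univ _) hzero).symm]
    rw [Finset.sum_insert (by simp [hij]), Finset.sum_singleton]
    rw [show Umat T r i i = 1 by simp [Umat], one_mul,
      show Umat T r j j = 1 by simp [Umat], mul_one]
    have hadj : T.adjMat ℚ i j
        = if i ≠ j ∧ (T.parent i = j ∨ T.parent j = i) then 1 else 0 := rfl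
    have hji : ¬ (j = i) := fun h => hij h.symm
    by_cases hpi : T.parent i = j
    · have hpj : ¬ (T.parent j = i) := fun h => parent_not_both T hij hpi h
      have hUij : Umat T r i j = 0 := by
        simp [Umat, hij, hpj]
      have hUji : Umat T r j i = -(r i)⁻¹ := by
        simp [Umat, hji, hpi, hij]
      rw [hUij, hUji, hLHS, hadj, if_pos ⟨hij, Or.inl hpi⟩]
      rw [zero_mul, add_zero, map_neg, Polynomial.C_1, _root_.map_one,
        mul_comm, neg_mul, inv_mul_cancel₀ (hrne i)]
    · by_cases hpj : T.parent j = i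
      · have hUij : Umat T r i j = -(r j)⁻¹ := by
          simp [Umat, hij, hpj, hji]
        have hUji : Umat T r j i = 0 := by
          simp [Umat, hji, hpi]
        rw [hUij, hUji, hLHS, hadj, if_pos ⟨hij, Or.inr hpj⟩]
        rw [mul_zero, zero_add, map_neg, Polynomial.C_1, _root_.map_one,
          neg_mul, inv_mul_cancel₀ (hrne j)]
      · have hUij : Umat T r i j = 0 := by simp [Umat, hij, hpj]
        have hUji : Umat T r j i = 0 := by
          simp [Umat, hji, hpi]
        rw [hUij, hUji, hLHS, hadj, if_neg (by tauto)]
        simp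

end factor

section count
variable {n : ℕ} (T : ParentTree n) (lvl : Fin (n + 1) → ℕ) (d k : ℕ)

lemma lvl_pos_s11 (hlvl0 : lvl 0 = 1) (hlvl : ∀ v, v ≠ 0 → lvl v = lvl (T.parent v) + 1)
    (v : Fin (n+1)) : 1 ≤ lvl v := by
  by_cases h : v = 0
  · rw [h, hlvl0]
  · rw [hlvl v h]; omega

lemma level_one (hlvl0 : lvl 0 = 1) (hlvl : ∀ v, v ≠ 0 → lvl v = lvl (T.parent v) + 1) :
    Finset.univ.filter (fun v => lvl v = 1) = {0} := by
  ext v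
  simp only [Finset.mem_filter, Finset.mem_univ, true_and, Finset.mem_singleton]
  constructor
  · intro h
    by_contra hv
    rw [hlvl v hv] at h
    have := lvl_pos_s11 T lvl hlvl0 hlvl (T.parent v)
    omega
  · rintro rfl; exact hlvl0

lemma level_biUnion (hlvl0 : lvl 0 = 1) (hlvl : ∀ v, v ≠ 0 → lvl v = lvl (T.parent v) + 1)
    (j : ℕ) (hj : 1 ≤ j) :
    Finset.univ.filter (fun v => lvl v = j + 1) =
      (Finset.univ.filter (fun v => lvl v = j)).biUnion T.children := by
  ext c
  simp only [Finset.mem_biUnion, Finset.mem_filter, Finset.mem_univ, true_and]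
  constructor
  · intro hc
    have hc0 : c ≠ 0 := by intro h; rw [h, hlvl0] at hc; omega
    refine ⟨T.parent c, ?_, (mem_children T).mpr ⟨rfl, (T.parent_lt c hc0).ne'⟩⟩
    have := hlvl c hc0; omega
  · rintro ⟨v, hv, hcv⟩
    rw [child_lvl T lvl hlvl hcv, hv]

lemma card_level (hlvl0 : lvl 0 = 1) (hlvl : ∀ v, v ≠ 0 → lvl v = lvl (T.parent v) + 1)
    (hbethe : ∀ v, lvl v < k → (T.children v).card = d - 1) :
    ∀ j, 1 ≤ j → j ≤ k →
      (Finset.univ.filter (fun v => lvl v = j)).card = (d-1)^(j-1) := by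
  intro j h1
  induction j, h1 using Nat.le_induction with
  | base => intro _; rw [level_one T lvl hlvl0 hlvl]; simp
  | succ j hj ih =>
    intro hjk
    rw [level_biUnion T lvl hlvl0 hlvl j hj, Finset.card_biUnion]
    · rw [Finset.sum_congr rfl (fun v hv => hbethe v (by
        have := (Finset.mem_filter.mp hv).2; omega))]
      rw [Finset.sum_const, smul_eq_mul, ih (by omega), ← pow_succ,
        show j - 1 + 1 = j + 1 - 1 by omega]
    · intro x hx y hy hxy
      rw [Function.onFun, Finset.disjoint_left]
      intro c hcx hcy
      exact hxy (((mem_children T).mp hcx).1.symm.trans ((mem_children T).mp hcy).1)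

end count

theorem stmt_11 {n : ℕ} (T : ParentTree n)
    (lvl : Fin (n + 1) → ℕ)
    (hlvl0 : lvl 0 = 1)
    (hlvl : ∀ v, v ≠ 0 → lvl v = lvl (T.parent v) + 1)
    (d k : ℕ) (hd : 2 ≤ d) (hk : 1 ≤ k)
    (hle : ∀ v, lvl v ≤ k)
    (hbethe : ∀ v, lvl v < k → (T.children v).card = d - 1)
    (hleaf : ∀ v, lvl v = k → (T.children v).card = 0) :
    (T.adjMat ℚ).charpoly =
      dicksonE ((d : ℚ) - 1) k *
        ∏ j ∈ Finset.Icc 1 (k - 1),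
          dicksonE ((d : ℚ) - 1) j ^ ((d - 2) * (d - 1) ^ (k - 1 - j)) := by
  apply phiRF_inj
  set a : ℚ := (d:ℚ) - 1 with ha
  set r : Fin (n+1) → RatFunc ℚ := fun v => rfun a k (lvl v) with hr
  have hdet : phiRF ((T.adjMat ℚ).charpoly) = ∏ v, r v := by
    rw [show (T.adjMat ℚ).charpoly = (charmatrix (T.adjMat ℚ)).det from rfl,
      RingHom.map_det]
    rw [RingHom.mapMatrix_apply,
      show (charmatrix (T.adjMat ℚ)).map phiRF
        = Umat T r * Matrix.diagonal r * (Umat T r)ᵀ from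
      factor T lvl d k hlvl0 hlvl hd hk hle hbethe hleaf]
    rw [Matrix.det_mul, Matrix.det_mul, Umat_det, Matrix.det_transpose, Umat_det,
      Matrix.det_diagonal, one_mul, mul_one]
  rw [hdet]
  have hprod1 : ∏ v, r v = ∏ j ∈ Finset.Icc 1 k, (rfun a k j) ^ ((d-1)^(j-1)) := by
    rw [← Finset.prod_fiberwise_of_maps_to (g := lvl) (t := Finset.Icc 1 k)
      (fun v _ => Finset.mem_Icc.mpr ⟨lvl_pos_s11 T lvl hlvl0 hlvl v, hle v⟩) r]
    refine Finset.prod_congr rfl fun j hj => ?_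
    obtain ⟨h1, h2⟩ := Finset.mem_Icc.mp hj
    rw [Finset.prod_congr rfl (fun v hv => show r v = rfun a k j by
      rw [hr]; simp only; rw [(Finset.mem_filter.mp hv).2])]
    rw [Finset.prod_const, card_level T lvl d k hlvl0 hlvl hbethe j h1 h2]
  rw [hprod1]
  have hprod2 : ∏ j ∈ Finset.Icc 1 k, (rfun a k j) ^ ((d-1)^(j-1)) =
      phiRF (∏ j ∈ Finset.Icc 1 k, dicksonE a (k+1-j) ^ ((d-1)^(j-1))) /
      phiRF (∏ j ∈ Finset.Icc 1 k, dicksonE a (k-j) ^ ((d-1)^(j-1))) := by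
    rw [map_prod, map_prod, ← Finset.prod_div_distrib]
    refine Finset.prod_congr rfl fun j hj => ?_
    rw [rfun, div_pow, map_pow, map_pow]
    rfl
  rw [hprod2, poly_id a d k hd hk, _root_.map_mul, mul_div_assoc, div_self, mul_one]
  rw [Ne, map_eq_zero_iff phiRF phiRF_inj]
  exact Finset.prod_ne_zero_iff.mpr fun j _ => pow_ne_zero _ (dicksonE_ne_zero a _)
end

section
/- For the path graph on k vertices (k ≥ 1), the graph energy (sum of absolute values of the adjacency eigenvalues) equals 2·(cot(π/(2k+2)) - 1) if k is odd, and 2·(csc(π/(2k+2)) - 1) if k is even. -/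
open Polynomial Real

/-- Adjacency matrix of the path graph on `k` vertices. -/
def pathAdj (k : ℕ) : Matrix (Fin k) (Fin k) ℝ :=
  Matrix.of fun i j => if i.val + 1 = j.val ∨ j.val + 1 = i.val then 1 else 0

/-- The graph energy: sum of absolute values of the adjacency eigenvalues
(roots of the characteristic polynomial, with multiplicity). -/
noncomputable def pathEnergy (k : ℕ) : ℝ :=
  (((pathAdj k).charpoly).roots.map (fun x => |x|)).sum

lemma charpoly_eval' {k : ℕ} (M : Matrix (Fin k) (Fin k) ℝ) (t : ℝ) :
    M.charpoly.eval t = (t • (1 : Matrix (Fin k) (Fin k) ℝ) - M).det := by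
  rw [Matrix.charpoly, ← Polynomial.coe_evalRingHom, RingHom.map_det]
  congr 1
  ext i j
  by_cases h : i = j <;>
    simp [h, Matrix.charmatrix_apply_eq, Matrix.charmatrix_apply_ne, Matrix.one_apply,
      Matrix.sub_apply, Matrix.smul_apply]

lemma eig {k : ℕ} (h : ℕ) (hh : h < k) :
    (pathAdj k).charpoly.eval (2 * Real.cos (((h:ℝ)+1) * π / (k+1))) = 0 := by
  set θ : ℝ := ((h:ℝ)+1) * π / (k+1) with hθ
  have hk1 : (0:ℝ) < (k:ℝ) + 1 := by positivity
  have hθpos : 0 < θ := by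
    apply div_pos _ hk1
    positivity
  have hθlt : θ < π := by
    rw [hθ, div_lt_iff₀ hk1]
    have : (h:ℝ) + 1 < (k:ℝ) + 1 := by exact_mod_cast Nat.succ_lt_succ hh
    nlinarith [Real.pi_pos]
  have hsin : Real.sin θ ≠ 0 := ne_of_gt (Real.sin_pos_of_pos_of_lt_pi hθpos hθlt)
  set w : ℕ → ℝ := fun j => Real.sin (j * θ) with hw
  have hw0 : w 0 = 0 := by simp [hw]
  have hwk : w (k+1) = 0 := by
    have h1 : ((k:ℝ)+1) * θ = ((h:ℝ)+1) * π := by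
      rw [hθ]; field_simp
    simp only [hw]
    push_cast
    rw [h1]
    have h2 : ((h:ℝ)+1) * π = ((h+1 : ℤ) : ℝ) * π := by push_cast; ring
    rw [h2, Real.sin_int_mul_pi]
  set v : Fin k → ℝ := fun i => w (i.val + 1) with hv
  rw [charpoly_eval', ← Matrix.exists_mulVec_eq_zero_iff]
  refine ⟨v, ?_, ?_⟩
  · intro hzero
    have := congr_fun hzero ⟨0, hh.trans_le' (Nat.zero_le h)⟩
    simp [hv, hw] at this
    exact hsin this
  · rw [Matrix.sub_mulVec, Matrix.smul_mulVec, Matrix.one_mulVec]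
    funext i
    have hsum : (pathAdj k).mulVec v i = w (i.val+2) + w i.val := by
      rw [Matrix.mulVec, dotProduct]
      have hpt : ∀ j : Fin k, (pathAdj k) i j * v j
          = (if i.val+1 = j.val then w (j.val+1) else 0)
            + (if j.val+1 = i.val then w (j.val+1) else 0) := by
        intro j
        simp only [pathAdj, Matrix.of_apply, hv]
        by_cases h1 : i.val + 1 = j.val <;> by_cases h2 : j.val + 1 = i.val
        · omega
        · simp [h1, h2]
        · simp [h1, h2]
        · simp [h1, h2]
      rw [Finset.sum_congr rfl (fun j _ => hpt j), Finset.sum_add_distrib]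
      congr 1
      · rw [Fin.sum_univ_eq_sum_range (fun j => if i.val+1 = j then w (j+1) else 0) k,
          Finset.sum_ite_eq (Finset.range k) (i.val+1) (fun j => w (j+1))]
        by_cases hik : i.val + 1 < k
        · simp [Finset.mem_range, hik]
        · have hik' : i.val + 1 = k := by omega
          simp only [Finset.mem_range, hik, if_false]
          rw [show i.val + 2 = k + 1 by omega, hwk]
      · rcases Nat.eq_zero_or_eq_succ_pred i.val with h0 | hs
        · rw [h0, hw0]
          apply Finset.sum_eq_zero
          intro j _
          simp [h0]
        · set m := i.val - 1 with hm
          have hcongr : ∀ j : Fin k, (if j.val+1 = i.val then w (j.val+1) else 0)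
              = (if m = j.val then w (j.val+1) else 0) := by
            intro j
            by_cases hj : j.val + 1 = i.val
            · rw [if_pos hj, if_pos (by omega)]
            · rw [if_neg hj, if_neg (by omega)]
          rw [Finset.sum_congr rfl (fun j _ => hcongr j),
            Fin.sum_univ_eq_sum_range (fun j => if m = j then w (j+1) else 0) k,
            Finset.sum_ite_eq (Finset.range k) m (fun j => w (j+1))]
          have hmk : m ∈ Finset.range k := Finset.mem_range.mpr (by omega)
          rw [if_pos hmk]
          congr 1
          omega
    simp only [Pi.sub_apply, Pi.smul_apply, smul_eq_mul, hsum, Pi.zero_apply]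
    have : w (i.val+2) + w i.val = 2 * Real.cos θ * v i := by
      simp only [hw, hv]
      push_cast
      rw [show ((i:ℝ) + 2) * θ = ((i:ℝ)+1)*θ + θ by ring,
        show ((i:ℝ)) * θ = ((i:ℝ)+1)*θ - θ by ring, Real.sin_add, Real.sin_sub]
      ring
    rw [this]
    ring

lemma roots_eq {k : ℕ} :
    (pathAdj k).charpoly.roots
      = (Multiset.range k).map (fun h : ℕ => 2 * Real.cos (((h:ℝ)+1) * π / (k+1))) := by
  set f : ℕ → ℝ := fun h => 2 * Real.cos (((h:ℝ)+1) * π / (k+1)) with hf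
  set M := (Multiset.range k).map f with hM
  have hmono : ∀ h ∈ Multiset.range k, ((h:ℝ)+1) * π / (k+1) ∈ Set.Icc (0:ℝ) π := by
    intro h hh
    rw [Multiset.mem_range] at hh
    constructor
    · positivity
    · rw [div_le_iff₀ (by positivity)]
      have : (h:ℝ) + 1 ≤ (k:ℝ) + 1 := by exact_mod_cast Nat.succ_le_succ hh.le
      nlinarith [Real.pi_pos]
  have hnodup : M.Nodup := by
    refine Multiset.Nodup.map_on ?_ (Multiset.nodup_range k)
    intro x hx y hy hxy
    simp only [hf] at hxy
    have heq := Real.injOn_cos (hmono x hx) (hmono y hy) (by linarith)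
    have hπ : (0:ℝ) < π / (k+1) := by positivity
    have heq' : ((x:ℝ)+1) * (π/(k+1)) = ((y:ℝ)+1) * (π/(k+1)) := by
      rw [← mul_div_assoc, ← mul_div_assoc]; exact heq
    have := mul_right_cancel₀ hπ.ne' heq'
    have : (x:ℝ) = y := by linarith
    exact_mod_cast this
  have hle : M ≤ (pathAdj k).charpoly.roots := by
    rw [Multiset.le_iff_subset hnodup]
    intro a ha
    rw [hM, Multiset.mem_map] at ha
    obtain ⟨h, hh, rfl⟩ := ha
    rw [Polynomial.mem_roots ((pathAdj k).charpoly_monic.ne_zero)]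
    exact eig h (Multiset.mem_range.mp hh)
  have hcard : Multiset.card ((pathAdj k).charpoly.roots) ≤ Multiset.card M := by
    rw [hM, Multiset.card_map, Multiset.card_range]
    calc Multiset.card ((pathAdj k).charpoly.roots) ≤ (pathAdj k).charpoly.natDegree :=
      (pathAdj k).charpoly.card_roots'
    _ = k := by rw [Matrix.charpoly_natDegree_eq_dim, Fintype.card_fin]
  exact (Multiset.eq_of_le_of_card_le hle hcard).symm

lemma tel (α : ℝ) (hα : Real.sin α ≠ 0) (N : ℕ) :
    ∑ h ∈ Finset.range N, 2 * Real.cos ((2*(h:ℝ)+2)*α)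
      = (Real.sin ((2*(N:ℝ)+1)*α) - Real.sin α) / Real.sin α := by
  rw [eq_div_iff hα, Finset.sum_mul]
  have key := Finset.sum_range_sub (fun h : ℕ => Real.sin ((2*(h:ℝ)+1)*α)) N
  push_cast at key
  rw [show Real.sin ((2*(N:ℝ)+1)*α) - Real.sin α
      = Real.sin ((2*(N:ℝ)+1)*α) - Real.sin ((2*(0:ℝ)+1)*α) by norm_num, ← key]
  apply Finset.sum_congr rfl
  intro h _
  rw [Real.sin_sub_sin]
  push_cast
  ring_nf

lemma case_odd (m : ℕ) :
    ∑ h ∈ Finset.range (2*m+1), |2 * Real.cos ((2*(h:ℝ)+2) * (π/(4*(m:ℝ)+4)))|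
      = 2 * (Real.cos (π/(4*(m:ℝ)+4)) / Real.sin (π/(4*(m:ℝ)+4)) - 1) := by
  set α : ℝ := π/(4*(m:ℝ)+4) with hα
  set g : ℕ → ℝ := fun h => |2 * Real.cos ((2*(h:ℝ)+2) * α)| with hg
  have hαpos : 0 < α := by rw [hα]; positivity
  have hπα : (4*(m:ℝ)+4) * α = π := by rw [hα]; field_simp
  have hαlt : α < π/2 := by nlinarith [Real.pi_pos]
  have hsinpos : 0 < Real.sin α :=
    Real.sin_pos_of_pos_of_lt_pi hαpos (by nlinarith [Real.pi_pos])
  have h1 : ∑ h ∈ Finset.range (2*m+1), g h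
      = ∑ h ∈ Finset.range (m+1), g h + ∑ h ∈ Finset.Ico (m+1) (2*m+1), g h := by
    rw [Finset.range_eq_Ico, ← Finset.sum_Ico_consecutive g (Nat.zero_le (m+1))
      (show m+1 ≤ 2*m+1 by omega), ← Finset.range_eq_Ico]
  have h2 : ∑ h ∈ Finset.Ico (m+1) (2*m+1), g h = ∑ j ∈ Finset.range m, g (m+1+j) := by
    have he : 2*m+1 - (m+1) = m := by omega
    rw [Finset.sum_Ico_eq_sum_range, he]
  have h3 : ∀ j ∈ Finset.range m, g (m+1+j) = g (m-1-j) := by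
    intro j hj
    rw [Finset.mem_range] at hj
    simp only [hg]
    have hc : (↑(m-1-j) : ℝ) = (m:ℝ)-1-j := by
      have : m - 1 - j = m - (1+j) := by omega
      rw [this, Nat.cast_sub (by omega)]
      push_cast; ring
    rw [hc]
    have hang : (2*(↑(m+1+j):ℝ)+2) * α = π - (2*((m:ℝ)-1-j)+2)*α := by
      push_cast
      nlinarith [hπα]
    rw [hang, Real.cos_pi_sub, mul_neg, abs_neg]
  have h4 : g m = 0 := by
    simp only [hg]
    have : (2*(m:ℝ)+2) * α = π/2 := by nlinarith [hπα]
    rw [this, Real.cos_pi_div_two, mul_zero, abs_zero]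
  have h5 : ∑ h ∈ Finset.range m, g h = ∑ h ∈ Finset.range m, 2 * Real.cos ((2*(h:ℝ)+2)*α) := by
    apply Finset.sum_congr rfl
    intro h hh
    rw [Finset.mem_range] at hh
    simp only [hg]
    rw [abs_of_nonneg]
    apply mul_nonneg (by norm_num)
    apply Real.cos_nonneg_of_mem_Icc
    constructor
    · nlinarith
    · have : (h:ℝ) ≤ (m:ℝ) - 1 := by
        have : (h:ℝ) + 1 ≤ m := by exact_mod_cast hh
        linarith
      nlinarith
  calc ∑ h ∈ Finset.range (2*m+1), g h
      = ∑ h ∈ Finset.range (m+1), g h + ∑ j ∈ Finset.range m, g (m-1-j) := by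
        rw [h1, h2, Finset.sum_congr rfl h3]
    _ = (∑ h ∈ Finset.range m, g h + g m) + ∑ j ∈ Finset.range m, g j := by
        rw [Finset.sum_range_succ, Finset.sum_range_reflect]
    _ = 2 * ∑ h ∈ Finset.range m, 2 * Real.cos ((2*(h:ℝ)+2)*α) := by
        rw [h4, h5]; ring
    _ = 2 * (Real.cos α / Real.sin α - 1) := by
        rw [tel α hsinpos.ne' m]
        have : (2*(m:ℝ)+1) * α = π/2 - α := by nlinarith [hπα]
        rw [this, Real.sin_pi_div_two_sub]
        field_simp

lemma case_even (m : ℕ) :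
    ∑ h ∈ Finset.range (2*m), |2 * Real.cos ((2*(h:ℝ)+2) * (π/(4*(m:ℝ)+2)))|
      = 2 * ((Real.sin (π/(4*(m:ℝ)+2)))⁻¹ - 1) := by
  set α : ℝ := π/(4*(m:ℝ)+2) with hα
  set g : ℕ → ℝ := fun h => |2 * Real.cos ((2*(h:ℝ)+2) * α)| with hg
  have hαpos : 0 < α := by rw [hα]; positivity
  have hπα : (4*(m:ℝ)+2) * α = π := by rw [hα]; field_simp
  have hαlt : α ≤ π/2 := by nlinarith [Real.pi_pos]
  have hsinpos : 0 < Real.sin α :=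
    Real.sin_pos_of_pos_of_lt_pi hαpos (by nlinarith [Real.pi_pos])
  have h1 : ∑ h ∈ Finset.range (2*m), g h
      = ∑ h ∈ Finset.range m, g h + ∑ h ∈ Finset.Ico m (2*m), g h := by
    rw [Finset.range_eq_Ico, ← Finset.sum_Ico_consecutive g (Nat.zero_le m)
      (show m ≤ 2*m by omega), ← Finset.range_eq_Ico]
  have h2 : ∑ h ∈ Finset.Ico m (2*m), g h = ∑ j ∈ Finset.range m, g (m+j) := by
    have he : 2*m - m = m := by omega
    rw [Finset.sum_Ico_eq_sum_range, he]
  have h3 : ∀ j ∈ Finset.range m, g (m+j) = g (m-1-j) := by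
    intro j hj
    rw [Finset.mem_range] at hj
    simp only [hg]
    have hc : (↑(m-1-j) : ℝ) = (m:ℝ)-1-j := by
      have : m - 1 - j = m - (1+j) := by omega
      rw [this, Nat.cast_sub (by omega)]
      push_cast; ring
    rw [hc]
    have hang : (2*(↑(m+j):ℝ)+2) * α = π - (2*((m:ℝ)-1-j)+2)*α := by
      push_cast
      nlinarith [hπα]
    rw [hang, Real.cos_pi_sub, mul_neg, abs_neg]
  have h5 : ∑ h ∈ Finset.range m, g h = ∑ h ∈ Finset.range m, 2 * Real.cos ((2*(h:ℝ)+2)*α) := by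
    apply Finset.sum_congr rfl
    intro h hh
    rw [Finset.mem_range] at hh
    simp only [hg]
    rw [abs_of_nonneg]
    apply mul_nonneg (by norm_num)
    apply Real.cos_nonneg_of_mem_Icc
    constructor
    · nlinarith
    · have : (h:ℝ) ≤ (m:ℝ) - 1 := by
        have : (h:ℝ) + 1 ≤ m := by exact_mod_cast hh
        linarith
      nlinarith
  calc ∑ h ∈ Finset.range (2*m), g h
      = ∑ h ∈ Finset.range m, g h + ∑ j ∈ Finset.range m, g (m-1-j) := by
        rw [h1, h2, Finset.sum_congr rfl h3]
    _ = 2 * ∑ h ∈ Finset.range m, 2 * Real.cos ((2*(h:ℝ)+2)*α) := by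
        rw [Finset.sum_range_reflect, h5]; ring
    _ = 2 * ((Real.sin α)⁻¹ - 1) := by
        rw [tel α hsinpos.ne' m]
        have : (2*(m:ℝ)+1) * α = π/2 := by nlinarith [hπα]
        rw [this, Real.sin_pi_div_two]
        field_simp

theorem stmt_13 (k : ℕ) (hk : 1 ≤ k) :
    pathEnergy k = if Odd k then 2 * (Real.cot (Real.pi / (2 * k + 2)) - 1)
      else 2 * ((Real.sin (Real.pi / (2 * k + 2)))⁻¹ - 1) := by
  have hE : pathEnergy k = ∑ h ∈ Finset.range k, |2 * Real.cos (((h:ℝ)+1) * π / (k+1))| := by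
    rw [pathEnergy, roots_eq, Multiset.map_map]
    rfl
  rcases Nat.even_or_odd k with he | ho
  · obtain ⟨m, hm⟩ := he
    rw [if_neg (by simp [hm, (Nat.not_odd_iff_even).mpr ⟨m, hm⟩]), hE]
    have hm2 : k = 2 * m := by omega
    subst hm2
    have hcast : (2 * (↑(2*m) : ℝ) + 2) = 4*(m:ℝ)+2 := by push_cast; ring
    rw [hcast]
    rw [← case_even m]
    apply Finset.sum_congr rfl
    intro h _
    congr 1
    congr 1
    have h1 : ((2*m : ℕ) : ℝ) + 1 = 2*(m:ℝ)+1 := by push_cast; ring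
    rw [h1]
    have d1 : (2*(m:ℝ)+1) ≠ 0 := by positivity
    have d2 : (4*(m:ℝ)+2) ≠ 0 := by positivity
    congr 1
    field_simp
    ring
  · obtain ⟨m, hm⟩ := ho
    rw [if_pos ⟨m, hm⟩, hE, Real.cot_eq_cos_div_sin]
    subst hm
    have hcast : (2 * (↑(2*m+1) : ℝ) + 2) = 4*(m:ℝ)+4 := by push_cast; ring
    rw [hcast]
    rw [← case_odd m]
    apply Finset.sum_congr rfl
    intro h _
    congr 1
    congr 1
    have h1 : ((2*m+1 : ℕ) : ℝ) + 1 = 2*(m:ℝ)+2 := by push_cast; ring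
    rw [h1]
    have d1 : (2*(m:ℝ)+2) ≠ 0 := by positivity
    have d2 : (4*(m:ℝ)+4) ≠ 0 := by positivity
    congr 1
    field_simp
    ring
end
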